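/- arXiv:1005.3678 — 3 statements merged into one kernel-verified Lean document; each statement's English description precedes it below -/
import Mathlib

section
/- Let E be a sharply orthocomplete S-dominating effect algebra. Then E is centrally dominating and centrally orthocomplete. -/
universe u v

/-- An effect algebra: a partial algebra `(E; ⊕, 0, 1)` with `0 ≠ 1`, where `⊕` is
partially defined (domain `D`), commutative and associative where defined, every
element has a unique orthosupplement (`compl`, skolemizing axiom (Eiii)), and
`1 ⊕ x` defined implies `x = 0`. -/
structure EffectAlgebra (E : Type u) where
  D : E → E → Prop
  oplus : E → E → E
  zero : E
  one : E
  zero_ne_one : zero ≠ one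
  D_comm : ∀ x y, D x y → D y x
  oplus_comm : ∀ x y, D x y → oplus x y = oplus y x
  assoc : ∀ x y z, D x y → D (oplus x y) z →
      D y z ∧ D x (oplus y z) ∧ oplus (oplus x y) z = oplus x (oplus y z)
  assoc' : ∀ x y z, D y z → D x (oplus y z) →
      D x y ∧ D (oplus x y) z ∧ oplus (oplus x y) z = oplus x (oplus y z)
  compl : E → E
  D_compl : ∀ x, D x (compl x)
  oplus_compl : ∀ x, oplus x (compl x) = one
  compl_unique : ∀ x y, D x y → oplus x y = one → y = compl x
  one_max : ∀ x, D one x → x = zero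

namespace EffectAlgebra

variable {E : Type u} (A : EffectAlgebra E)

/-- The induced order: `x ≤ y` iff `x ⊕ z = y` for some `z`. -/
def le (x y : E) : Prop := ∃ z, A.D x z ∧ A.oplus x z = y

def IsLB (S : Set E) (m : E) : Prop := ∀ x ∈ S, A.le m x
def IsUB (S : Set E) (m : E) : Prop := ∀ x ∈ S, A.le x m

/-- `m` is the infimum of `S` computed within the subposet `P`. -/
def IsInfIn (P : Set E) (S : Set E) (m : E) : Prop :=
  m ∈ P ∧ A.IsLB S m ∧ ∀ z ∈ P, A.IsLB S z → A.le z m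

/-- `m` is the supremum of `S` computed within the subposet `P`. -/
def IsSupIn (P : Set E) (S : Set E) (m : E) : Prop :=
  m ∈ P ∧ A.IsUB S m ∧ ∀ z ∈ P, A.IsUB S z → A.le m z

/-- `w` is sharp iff the meet `w ∧ w'` exists in `E` and equals `0`. -/
def Sharp (w : E) : Prop := A.IsInfIn Set.univ {w, A.compl w} A.zero

/-- The set `S(E)` of sharp elements. -/
def sharpSet : Set E := {w | A.Sharp w}

def HasMeet (x y : E) : Prop := ∃ m, A.IsInfIn Set.univ {x, y} m
def HasJoin (x y : E) : Prop := ∃ j, A.IsSupIn Set.univ {x, y} j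

/-- Every `x` has a least sharp element above it, which is the infimum of the sharp
elements above `x` both in `E` and in `S(E)`. -/
def SharplyDominating : Prop :=
  ∀ x : E, ∃ w, A.Sharp w ∧ A.le x w ∧
    A.IsInfIn Set.univ {v | A.Sharp v ∧ A.le x v} w ∧
    A.IsInfIn A.sharpSet {v | A.Sharp v ∧ A.le x v} w

/-- Sharply dominating, and `x ∧ w` exists for every `x ∈ E`, `w ∈ S(E)`. -/
def SDominating : Prop :=
  A.SharplyDominating ∧ ∀ x w : E, A.Sharp w → A.HasMeet x w

end EffectAlgebra

/-- `SumDef A l s` : the orthosum of the finite list `l` is defined and equals `s`. -/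
inductive EffectAlgebra.SumDef {E : Type u} (A : EffectAlgebra E) : List E → E → Prop
  | nil : EffectAlgebra.SumDef A [] A.zero
  | cons {x : E} {l : List E} {s : E} : EffectAlgebra.SumDef A l s → A.D x s →
      EffectAlgebra.SumDef A (x :: l) (A.oplus x s)

namespace EffectAlgebra

variable {E : Type u} (A : EffectAlgebra E)

/-- A family is orthogonal iff every finite subfamily has a defined orthosum. -/
def Orthogonal {ι : Type v} (x : ι → E) : Prop :=
  ∀ l : List ι, l.Nodup → ∃ s, A.SumDef (l.map x) s

/-- The set of finite partial orthosums of a family. -/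
def finiteSums {ι : Type v} (x : ι → E) : Set E :=
  {s | ∃ l : List ι, l.Nodup ∧ A.SumDef (l.map x) s}

/-- `v = ⊕ x` : the family is orthogonal and `v` is the supremum in `E` of all
finite partial orthosums. -/
def HasOrthoSum {ι : Type v} (x : ι → E) (v : E) : Prop :=
  A.Orthogonal x ∧ A.IsSupIn Set.univ (A.finiteSums x) v

/-- Every family dominated elementwise by an orthogonal family of sharp
elements has an orthosum. -/
def SharplyOrthocomplete : Prop :=
  ∀ (ι : Type u) (x w : ι → E), (∀ k, A.Sharp (w k)) → A.Orthogonal w →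
    (∀ k, A.le (x k) (w k)) → ∃ v, A.HasOrthoSum x v

/-- `c` is central: for every `y` the meets `y ∧ c`, `y ∧ c'` exist and
`y = (y ∧ c) ∨ (y ∧ c')`. -/
def Central (c : E) : Prop :=
  ∀ y : E, ∃ m₁ m₂, A.IsInfIn Set.univ {y, c} m₁ ∧
    A.IsInfIn Set.univ {y, A.compl c} m₂ ∧ A.IsSupIn Set.univ {m₁, m₂} y

/-- The center `C(E)`. -/
def centerSet : Set E := {c | A.Central c}

def CentrallyDominating : Prop :=
  ∀ x : E, ∃ c, A.Central c ∧ A.le x c ∧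
    A.IsInfIn Set.univ {d | A.Central d ∧ A.le x d} c ∧
    A.IsInfIn A.centerSet {d | A.Central d ∧ A.le x d} c

def CentrallyOrthocomplete : Prop :=
  ∀ (ι : Type u) (x c : ι → E), (∀ k, A.Central (c k)) → A.Orthogonal c →
    (∀ k, A.le (x k) (c k)) → ∃ v, A.HasOrthoSum x v

/-- `P` is bifull in `E`: for `S ⊆ P`, the join of `S` in `P` exists iff the join
of `S` in `E` exists, and then they coincide. -/
def Bifull (P : Set E) : Prop :=
  ∀ S ⊆ P, (∀ s, A.IsSupIn P S s → A.IsSupIn Set.univ S s) ∧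
    (∀ s, A.IsSupIn Set.univ S s → A.IsSupIn P S s)

/-- The subposet `P` is a complete lattice: every subset of `P` has a supremum
(and an infimum) computed within `P`. -/
def CompleteIn (P : Set E) : Prop :=
  ∀ S ⊆ P, (∃ s, A.IsSupIn P S s) ∧ (∃ m, A.IsInfIn P S m)

/-- `E` is a complete lattice. -/
def Complete : Prop :=
  ∀ S : Set E, (∃ s, A.IsSupIn Set.univ S s) ∧ (∃ m, A.IsInfIn Set.univ S m)

/-- The induced order of `E` is a lattice. -/
def LatticeOrdered : Prop := ∀ x y : E, A.HasMeet x y ∧ A.HasJoin x y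

/-- `x ↔ y` : `x ∨ y = x ⊕ (y ⊖ (x ∧ y))`. -/
def Compatible (x y : E) : Prop :=
  ∃ m j z, A.IsInfIn Set.univ {x, y} m ∧ A.IsSupIn Set.univ {x, y} j ∧
    A.D m z ∧ A.oplus m z = y ∧ A.D x z ∧ A.oplus x z = j

/-- An MV-effect algebra: a lattice effect algebra all of whose pairs of elements
are compatible. -/
def MV : Prop := A.LatticeOrdered ∧ ∀ x y : E, A.Compatible x y

/-- `nx = x ⊕ ⋯ ⊕ x` (`n` times) is defined. -/
def nTimesDef (n : ℕ) (x : E) : Prop := ∃ s, A.SumDef (List.replicate n x) s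

/-- `ord x < ∞` for every nonzero `x`. -/
def IsArchimedean : Prop := ∀ x : E, x ≠ A.zero → ∃ n : ℕ, ¬ A.nTimesDef n x

def Atom (a : E) : Prop := a ≠ A.zero ∧ ∀ b, A.le b a → b = A.zero ∨ b = a

def Atomic : Prop := ∀ x : E, x ≠ A.zero → ∃ a, A.Atom a ∧ A.le a x

/-- The subposet `P` (closed under `'`) is an orthomodular lattice. -/
def OrthomodularIn (P : Set E) : Prop :=
  (∀ x ∈ P, ∀ y ∈ P, (∃ m, A.IsInfIn P {x, y} m) ∧ (∃ j, A.IsSupIn P {x, y} j)) ∧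
  A.zero ∈ P ∧ A.one ∈ P ∧ (∀ x ∈ P, A.compl x ∈ P) ∧
  (∀ x ∈ P, A.IsInfIn P {x, A.compl x} A.zero ∧ A.IsSupIn P {x, A.compl x} A.one) ∧
  (∀ x ∈ P, ∀ y ∈ P, A.le x y →
    ∃ m, A.IsInfIn P {y, A.compl x} m ∧ A.IsSupIn P {x, m} y)

def DistributiveIn (P : Set E) : Prop :=
  ∀ x ∈ P, ∀ y ∈ P, ∀ z ∈ P, ∀ jyz mxy mxz m : E,
    A.IsSupIn P {y, z} jyz → A.IsInfIn P {x, y} mxy → A.IsInfIn P {x, z} mxz →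
    A.IsInfIn P {x, jyz} m → A.IsSupIn P {mxy, mxz} m

/-- The subposet `P` is a Boolean algebra (complemented distributive lattice with
bounds, complement given by `'`). -/
def BooleanIn (P : Set E) : Prop :=
  (∀ x ∈ P, ∀ y ∈ P, (∃ m, A.IsInfIn P {x, y} m) ∧ (∃ j, A.IsSupIn P {x, y} j)) ∧
  A.zero ∈ P ∧ A.one ∈ P ∧ (∀ x ∈ P, A.compl x ∈ P) ∧
  (∀ x ∈ P, A.IsInfIn P {x, A.compl x} A.zero ∧ A.IsSupIn P {x, A.compl x} A.one) ∧
  A.DistributiveIn P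

/-- A block: a maximal set of pairwise compatible elements. -/
def Block (M : Set E) : Prop :=
  (∀ x ∈ M, ∀ y ∈ M, A.Compatible x y) ∧
  ∀ N : Set E, M ⊆ N → (∀ x ∈ N, ∀ y ∈ N, A.Compatible x y) → N = M

def AtomIn (M : Set E) (a : E) : Prop :=
  a ∈ M ∧ a ≠ A.zero ∧ ∀ b ∈ M, A.le b a → b = A.zero ∨ b = a

def AtomicIn (M : Set E) : Prop :=
  ∀ x ∈ M, x ≠ A.zero → ∃ a, A.AtomIn M a ∧ A.le a x


/-! ### Auxiliary basic lemmas -/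
set_option linter.dupNamespace false

lemma compl_one : A.compl A.one = A.zero := A.one_max _ (A.D_compl A.one)

lemma one_oplus_zero : A.oplus A.one A.zero = A.one := by
  have h := A.oplus_compl A.one; rwa [A.compl_one] at h

lemma D_zero_one : A.D A.zero A.one := by
  have h := A.D_compl A.one; rw [A.compl_one] at h; exact A.D_comm _ _ h

lemma zero_oplus_one : A.oplus A.zero A.one = A.one := by
  rw [A.oplus_comm _ _ A.D_zero_one]; exact A.one_oplus_zero

lemma compl_zero : A.compl A.zero = A.one :=
  (A.compl_unique _ _ A.D_zero_one A.zero_oplus_one).symm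

lemma compl_compl' (x : E) : A.compl (A.compl x) = x := by
  have hD : A.D (A.compl x) x := A.D_comm _ _ (A.D_compl x)
  have h1 : A.oplus (A.compl x) x = A.one := by
    rw [A.oplus_comm _ _ hD]; exact A.oplus_compl x
  exact (A.compl_unique _ _ hD h1).symm

lemma compl_inj {x y : E} (h : A.compl x = A.compl y) : x = y := by
  rw [← A.compl_compl' x, h, A.compl_compl']

lemma D_zero (x : E) : A.D A.zero x := by
  have h2 : A.D A.zero (A.oplus x (A.compl x)) := by
    rw [A.oplus_compl]; exact A.D_zero_one
  exact (A.assoc' A.zero x (A.compl x) (A.D_compl x) h2).1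

lemma zero_oplus (x : E) : A.oplus A.zero x = x := by
  have h2 : A.D A.zero (A.oplus x (A.compl x)) := by
    rw [A.oplus_compl]; exact A.D_zero_one
  obtain ⟨hD0x, hD, heq⟩ := A.assoc' A.zero x (A.compl x) (A.D_compl x) h2
  have h3 : A.oplus (A.oplus A.zero x) (A.compl x) = A.one := by
    rw [heq, A.oplus_compl, A.zero_oplus_one]
  have h4 := A.compl_unique _ _ hD h3
  calc A.oplus A.zero x = A.compl (A.compl (A.oplus A.zero x)) := (A.compl_compl' _).symm
    _ = A.compl (A.compl x) := by rw [← h4]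
    _ = x := A.compl_compl' x

lemma oplus_zero (x : E) : A.oplus x A.zero = x := by
  rw [A.oplus_comm _ _ (A.D_comm _ _ (A.D_zero x))]; exact A.zero_oplus x

lemma cancel_left {x a b : E} (hxa : A.D x a) (hxb : A.D x b)
    (h : A.oplus x a = A.oplus x b) : a = b := by
  have key : ∀ c : E, A.D x c → A.oplus x c = A.oplus x a →
      A.oplus (A.compl (A.oplus x a)) x = A.compl c := by
    intro c hxc hc
    have hs : A.D (A.oplus x c) (A.compl (A.oplus x a)) := by rw [hc]; exact A.D_compl _
    obtain ⟨h1, h2, h3⟩ := A.assoc x c (A.compl (A.oplus x a)) hxc hs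
    -- h3 : (x⊕c)⊕s' = x⊕(c⊕s')
    have h4 : A.oplus x (A.oplus c (A.compl (A.oplus x a))) = A.one := by
      rw [← h3, hc, A.oplus_compl]
    have h5 := A.compl_unique _ _ h2 h4
    -- h5 : c ⊕ s' = compl x
    obtain ⟨h6, h7, h8⟩ := A.assoc c (A.compl (A.oplus x a)) x h1 (by
      rw [h5]; exact A.D_comm _ _ (A.D_compl x))
    have h9 : A.oplus c (A.oplus (A.compl (A.oplus x a)) x) = A.one := by
      rw [← h8, h5, A.oplus_comm _ _ (A.D_comm _ _ (A.D_compl x)), A.oplus_compl]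
    exact A.compl_unique _ _ h7 h9
  have ha := key a hxa rfl
  have hb := key b hxb h.symm
  exact A.compl_inj (ha ▸ hb ▸ rfl)

lemma cancel_right {x a b : E} (hax : A.D a x) (hbx : A.D b x)
    (h : A.oplus a x = A.oplus b x) : a = b := by
  apply A.cancel_left (A.D_comm _ _ hax) (A.D_comm _ _ hbx)
  rwa [A.oplus_comm _ _ (A.D_comm _ _ hax), A.oplus_comm _ _ (A.D_comm _ _ hbx)]

lemma le_refl' (x : E) : A.le x x :=
  ⟨A.zero, A.D_comm _ _ (A.D_zero x), A.oplus_zero x⟩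

lemma zero_le (x : E) : A.le A.zero x := ⟨x, A.D_zero x, A.zero_oplus x⟩

lemma le_one (x : E) : A.le x A.one := ⟨A.compl x, A.D_compl x, A.oplus_compl x⟩

lemma le_zero {x : E} (h : A.le x A.zero) : x = A.zero := by
  obtain ⟨z, hD, hz⟩ := h
  have h1 : A.D (A.oplus x z) A.one := by rw [hz]; exact A.D_zero_one
  obtain ⟨h2, h3, _⟩ := A.assoc x z A.one hD h1
  have hz0 : z = A.zero := A.one_max z (A.D_comm _ _ h2)
  rw [hz0, A.oplus_zero] at hz; exact hz

lemma le_trans' {x y z : E} (h1 : A.le x y) (h2 : A.le y z) : A.le x z := by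
  obtain ⟨a, hDa, ha⟩ := h1
  obtain ⟨b, hDb, hb⟩ := h2
  rw [← ha] at hDb hb
  obtain ⟨h3, h4, h5⟩ := A.assoc x a b hDa hDb
  exact ⟨A.oplus a b, h4, by rw [← h5, hb]⟩

lemma le_antisymm' {x y : E} (h1 : A.le x y) (h2 : A.le y x) : x = y := by
  obtain ⟨a, hDa, ha⟩ := h1
  obtain ⟨b, hDb, hb⟩ := h2
  rw [← ha] at hDb hb
  obtain ⟨h3, h4, h5⟩ := A.assoc x a b hDa hDb
  rw [h5] at hb
  -- hb : x ⊕ (a⊕b) = x   but careful: hb : (x⊕a)⊕b = x before rw; after: x⊕(a⊕b)=x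
  have h6 : A.oplus x (A.oplus a b) = A.oplus x A.zero := by rw [hb, A.oplus_zero]
  have h7 : A.oplus a b = A.zero := A.cancel_left h4 (A.D_comm _ _ (A.D_zero x)) h6
  have h8 : a = A.zero := A.le_zero ⟨b, h3, h7⟩
  rw [h8, A.oplus_zero] at ha; exact ha

lemma D_of_le_compl {x y : E} (h : A.le x (A.compl y)) : A.D x y := by
  obtain ⟨z, hD, hz⟩ := h
  have h2 : A.D y (A.oplus x z) := by rw [hz]; exact A.D_compl y
  exact A.D_comm _ _ (A.assoc' y x z hD h2).1

lemma le_compl_of_D {x y : E} (h : A.D x y) : A.le y (A.compl x) := by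
  have hs : A.D (A.oplus x y) (A.compl (A.oplus x y)) := A.D_compl _
  obtain ⟨h1, h2, h3⟩ := A.assoc x y (A.compl (A.oplus x y)) h hs
  have h4 : A.oplus x (A.oplus y (A.compl (A.oplus x y))) = A.one := by
    rw [← h3, A.oplus_compl]
  exact ⟨A.compl (A.oplus x y), h1, A.compl_unique _ _ h2 h4⟩

lemma le_compl_of_D' {x y : E} (h : A.D x y) : A.le x (A.compl y) :=
  A.le_compl_of_D (A.D_comm _ _ h)

lemma D_of_le {x y : E} (h : A.le x (A.compl y)) : A.D y x := A.D_comm _ _ (A.D_of_le_compl h)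

lemma compl_le_compl {x y : E} (h : A.le x y) : A.le (A.compl y) (A.compl x) := by
  obtain ⟨z, hD, hz⟩ := h
  have h2 : A.D (A.oplus x z) (A.compl y) := by rw [hz]; exact A.D_compl y
  obtain ⟨h3, h4, h5⟩ := A.assoc x z (A.compl y) hD h2
  have h6 : A.oplus x (A.oplus z (A.compl y)) = A.one := by
    rw [← h5, hz, A.oplus_compl]
  have h7 := A.compl_unique _ _ h4 h6
  exact ⟨z, A.D_comm _ _ h3, by rw [A.oplus_comm _ _ (A.D_comm _ _ h3), ← h7]⟩

lemma le_of_compl_le {x y : E} (h : A.le (A.compl y) (A.compl x)) : A.le x y := by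
  have := A.compl_le_compl h; rwa [A.compl_compl', A.compl_compl'] at this

lemma le_compl_iff_D {x y : E} : A.le x (A.compl y) ↔ A.D x y :=
  ⟨fun h => A.D_of_le_compl h, fun h => A.le_compl_of_D' h⟩


/-! ### Monotonicity, cancellation, pair inf/sup helpers -/

lemma le_oplus_left {x y : E} (h : A.D x y) : A.le x (A.oplus x y) := ⟨y, h, rfl⟩

lemma le_oplus_right {x y : E} (h : A.D x y) : A.le y (A.oplus x y) :=
  ⟨x, A.D_comm _ _ h, A.oplus_comm _ _ (A.D_comm _ _ h)⟩

lemma D_of_le_left {a b c : E} (h : A.le a b) (hD : A.D b c) : A.D a c :=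
  A.D_of_le_compl (A.le_trans' h (A.le_compl_of_D' hD))

lemma D_of_le_right {a b c : E} (h : A.le a b) (hD : A.D c b) : A.D c a :=
  A.D_comm _ _ (A.D_of_le_left h (A.D_comm _ _ hD))

lemma D_mono {a b c d : E} (h1 : A.le a b) (h2 : A.le c d) (hD : A.D b d) : A.D a c :=
  A.D_of_le_left h1 (A.D_comm _ _ (A.D_of_le_left h2 (A.D_comm _ _ hD)))

lemma oplus_le_oplus_left {a b c : E} (h : A.le a b) (hD : A.D b c) :
    A.le (A.oplus a c) (A.oplus b c) := by
  obtain ⟨z, hz, haz⟩ := h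
  have h1 : A.D (A.oplus a z) c := by rw [haz]; exact hD
  obtain ⟨h2, h3, h4⟩ := A.assoc a z c hz h1
  have h5 : A.D a (A.oplus c z) := by
    rwa [A.oplus_comm _ _ h2] at h3
  obtain ⟨h6, h7, h8⟩ := A.assoc' a c z (A.D_comm _ _ h2) h5
  refine ⟨z, h7, ?_⟩
  rw [h8, ← A.oplus_comm _ _ h2, ← h4, haz]

lemma oplus_le_oplus_right {b c d : E} (h : A.le c d) (hD : A.D b d) :
    A.le (A.oplus b c) (A.oplus b d) := by
  have hbc : A.D b c := A.D_of_le_right h hD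
  have := A.oplus_le_oplus_left h (A.D_comm _ _ hD)
  rwa [A.oplus_comm _ _ (A.D_comm _ _ hbc), A.oplus_comm _ _ (A.D_comm _ _ hD)] at this

lemma oplus_le_oplus {a b c d : E} (h1 : A.le a b) (h2 : A.le c d) (hD : A.D b d) :
    A.le (A.oplus a c) (A.oplus b d) := by
  have hbc : A.D b c := A.D_comm _ _ (A.D_of_le_left h2 (A.D_comm _ _ hD))
  exact A.le_trans' (A.oplus_le_oplus_right h2 (A.D_of_le_left h1 hD))
    (A.oplus_le_oplus_left h1 hD)

lemma cancel_le_right {a b c : E} (hac : A.D a c) (hbc : A.D b c)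
    (h : A.le (A.oplus a c) (A.oplus b c)) : A.le a b := by
  obtain ⟨z, hz, hsum⟩ := h
  obtain ⟨h1, h2, h3⟩ := A.assoc a c z hac hz
  have h5 : A.D a (A.oplus z c) := by rwa [A.oplus_comm _ _ h1] at h2
  obtain ⟨h6, h7, h8⟩ := A.assoc' a z c (A.D_comm _ _ h1) h5
  have h9 : A.oplus (A.oplus a z) c = A.oplus b c := by
    rw [h8, ← A.oplus_comm _ _ h1, ← h3, hsum]
  exact ⟨z, h6, A.cancel_right h7 hbc h9⟩

lemma cancel_le_left {a b c : E} (hca : A.D c a) (hcb : A.D c b)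
    (h : A.le (A.oplus c a) (A.oplus c b)) : A.le a b := by
  apply A.cancel_le_right (A.D_comm _ _ hca) (A.D_comm _ _ hcb)
  rwa [A.oplus_comm _ _ (A.D_comm _ _ hca), A.oplus_comm _ _ (A.D_comm _ _ hcb)]

lemma le_sub {m y : E} (h : A.le m y) : ∃ n, A.D m n ∧ A.oplus m n = y := h

lemma sandwich {m n y a : E} (hD : A.D m n) (hsum : A.oplus m n = y) (h : A.le a m) :
    ∃ w, A.D a w ∧ A.oplus a w = y ∧ A.le n w := by
  obtain ⟨u, hu, hau⟩ := h
  have h1 : A.D (A.oplus a u) n := by rw [hau]; exact hD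
  obtain ⟨h2, h3, h4⟩ := A.assoc a u n hu h1
  exact ⟨A.oplus u n, h3, by rw [← h4, hau, hsum], A.le_oplus_right h2⟩

lemma pair_left' (x y : E) : x ∈ ({x, y} : Set E) := Set.mem_insert x _
lemma pair_right' (x y : E) : y ∈ ({x, y} : Set E) := Set.mem_insert_of_mem x rfl

lemma mkInf {x y m : E} (h1 : A.le m x) (h2 : A.le m y)
    (h3 : ∀ z, A.le z x → A.le z y → A.le z m) : A.IsInfIn Set.univ {x, y} m := by
  refine ⟨trivial, ?_, fun z _ hz => h3 z (hz x (pair_left' x y)) (hz y (pair_right' x y))⟩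
  intro a ha
  rcases ha with rfl | ha
  · exact h1
  · rw [Set.mem_singleton_iff] at ha; rw [ha]; exact h2

lemma mkSup {x y m : E} (h1 : A.le x m) (h2 : A.le y m)
    (h3 : ∀ z, A.le x z → A.le y z → A.le m z) : A.IsSupIn Set.univ {x, y} m := by
  refine ⟨trivial, ?_, fun z _ hz => h3 z (hz x (pair_left' x y)) (hz y (pair_right' x y))⟩
  intro a ha
  rcases ha with rfl | ha
  · exact h1
  · rw [Set.mem_singleton_iff] at ha; rw [ha]; exact h2

lemma inf_le_left {x y m : E} (h : A.IsInfIn Set.univ {x, y} m) : A.le m x :=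
  h.2.1 x (pair_left' x y)

lemma inf_le_right {x y m : E} (h : A.IsInfIn Set.univ {x, y} m) : A.le m y :=
  h.2.1 y (pair_right' x y)

lemma le_inf {x y m z : E} (h : A.IsInfIn Set.univ {x, y} m)
    (hx : A.le z x) (hy : A.le z y) : A.le z m := by
  refine h.2.2 z trivial ?_
  intro a ha
  rcases ha with rfl | ha
  · exact hx
  · rw [Set.mem_singleton_iff] at ha; rw [ha]; exact hy

lemma left_le_sup {x y m : E} (h : A.IsSupIn Set.univ {x, y} m) : A.le x m :=
  h.2.1 x (pair_left' x y)

lemma right_le_sup {x y m : E} (h : A.IsSupIn Set.univ {x, y} m) : A.le y m :=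
  h.2.1 y (pair_right' x y)

lemma sup_le {x y m z : E} (h : A.IsSupIn Set.univ {x, y} m)
    (hx : A.le x z) (hy : A.le y z) : A.le m z := by
  refine h.2.2 z trivial ?_
  intro a ha
  rcases ha with rfl | ha
  · exact hx
  · rw [Set.mem_singleton_iff] at ha; rw [ha]; exact hy

lemma inf_unique {S : Set E} {m m' : E} (h1 : A.IsInfIn Set.univ S m)
    (h2 : A.IsInfIn Set.univ S m') : m = m' :=
  A.le_antisymm' (h2.2.2 m trivial h1.2.1) (h1.2.2 m' trivial h2.2.1)

lemma sup_unique {S : Set E} {m m' : E} (h1 : A.IsSupIn Set.univ S m)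
    (h2 : A.IsSupIn Set.univ S m') : m = m' :=
  A.le_antisymm' (h1.2.2 m' trivial h2.2.1) (h2.2.2 m trivial h1.2.1)

lemma inf_congr {S T : Set E} {m : E} (h : A.IsInfIn Set.univ S m) (hST : S = T) :
    A.IsInfIn Set.univ T m := hST ▸ h

/-! ### Central elements -/

lemma D_compl_of_le {x c : E} (h : A.le x c) : A.D x (A.compl c) :=
  A.D_of_le_compl (by rw [A.compl_compl']; exact h)

lemma le_compl_swap {v c : E} (h : A.le v (A.compl c)) : A.le c (A.compl v) := by
  have h2 := A.compl_le_compl h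
  rw [A.compl_compl'] at h2
  exact A.le_trans' h2 (A.le_refl' _)

lemma ub_pair {x y z : E} (hx : A.le x z) (hy : A.le y z) : A.IsUB {x, y} z := by
  intro a ha
  rcases ha with rfl | ha
  · exact hx
  · rw [Set.mem_singleton_iff] at ha; rw [ha]; exact hy

lemma central_sharp {c : E} (hc : A.Central c) : A.Sharp c := by
  obtain ⟨d, q₁, hd', hq₁, _⟩ := hc (A.compl c)
  have hd : A.IsInfIn Set.univ {c, A.compl c} d := A.inf_congr hd' (Set.pair_comm _ _)
  obtain ⟨p1, q1, hp1, hq1, hs1⟩ := hc A.one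
  have hp1c : p1 = c := A.le_antisymm' (A.inf_le_right hp1)
    (A.le_inf hp1 (A.le_one c) (A.le_refl' c))
  have hq1c : q1 = A.compl c := A.le_antisymm' (A.inf_le_right hq1)
    (A.le_inf hq1 (A.le_one _) (A.le_refl' _))
  rw [hp1c, hq1c] at hs1
  have hdc : A.le d c := A.inf_le_left hd
  have hdc' : A.le d (A.compl c) := A.inf_le_right hd
  have hcd' : A.le c (A.compl d) := A.le_compl_swap hdc'
  have hc'd' : A.le (A.compl c) (A.compl d) := A.compl_le_compl hdc
  obtain ⟨pd, qd, hpd, hqd, hsd⟩ := hc (A.compl d)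
  have hpdc : pd = c := A.le_antisymm' (A.inf_le_right hpd)
    (A.le_inf hpd hcd' (A.le_refl' c))
  have hqdc : qd = A.compl c := A.le_antisymm' (A.inf_le_right hqd)
    (A.le_inf hqd hc'd' (A.le_refl' _))
  rw [hpdc, hqdc] at hsd
  have h1 : A.compl d = A.one := A.sup_unique hsd hs1
  have h2 : d = A.zero := by
    apply A.compl_inj; rw [h1, A.compl_zero]
  show A.IsInfIn Set.univ {c, A.compl c} A.zero
  rw [← h2]; exact hd

lemma central_decomp {c : E} (hc : A.Central c) {y p q : E}
    (hp : A.IsInfIn Set.univ {y, c} p) (hq : A.IsInfIn Set.univ {y, A.compl c} q) :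
    A.D p q ∧ A.oplus p q = y := by
  obtain ⟨p₀, q₀, hp₀, hq₀, hs⟩ := hc y
  have key : A.D p₀ q₀ ∧ A.oplus p₀ q₀ = y := by
    have hpc : A.le p₀ c := A.inf_le_right hp₀
    have hpy : A.le p₀ y := A.inf_le_left hp₀
    have hqc' : A.le q₀ (A.compl c) := A.inf_le_right hq₀
    have hqy : A.le q₀ y := A.inf_le_left hq₀
    have hDpq : A.D p₀ q₀ :=
      A.D_of_le_compl (A.le_trans' hpc (A.le_compl_swap hqc'))
    refine ⟨hDpq, ?_⟩
    have hDpc' : A.D p₀ (A.compl c) := A.D_compl_of_le hpc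
    have h3 : A.le y (A.oplus p₀ (A.compl c)) :=
      hs.2.2 _ trivial (A.ub_pair (A.le_oplus_left hDpc')
        (A.le_trans' hqc' (A.le_oplus_right hDpc')))
    obtain ⟨r, hDpr, hpr⟩ := hpy
    have hrc' : A.le r (A.compl c) := by
      apply A.cancel_le_left hDpr hDpc'
      rw [hpr]; exact h3
    have hry : A.le r y := by rw [← hpr]; exact A.le_oplus_right hDpr
    have hrq : A.le r q₀ := A.le_inf hq₀ hry hrc'
    -- symmetric side
    have hDqc : A.D q₀ c := A.D_of_le_compl hqc'
    have h3' : A.le y (A.oplus q₀ c) :=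
      hs.2.2 _ trivial (A.ub_pair (A.le_trans' hpc (A.le_oplus_right hDqc))
        (A.le_oplus_left hDqc))
    obtain ⟨s, hDqs, hqs⟩ := hqy
    have hsc : A.le s c := by
      apply A.cancel_le_left hDqs hDqc
      rw [hqs]; exact h3'
    have hsy : A.le s y := by rw [← hqs]; exact A.le_oplus_right hDqs
    have hsp : A.le s p₀ := A.le_inf hp₀ hsy hsc
    obtain ⟨w, hDrw, hrw⟩ := hrq
    obtain ⟨w2, hDsw2, hsw2⟩ := hsp
    -- p₀ ⊕ q₀ = y ⊕ w
    have hD1 : A.D p₀ (A.oplus r w) := by rw [hrw]; exact hDpq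
    obtain ⟨_, hDyw, e1⟩ := A.assoc' p₀ r w hDrw hD1
    rw [hpr] at hDyw e1
    -- p₀ ⊕ q₀ = y ⊕ w2
    have hD2 : A.D q₀ (A.oplus s w2) := by rw [hsw2]; exact A.D_comm _ _ hDpq
    obtain ⟨_, hDyw2, e2⟩ := A.assoc' q₀ s w2 hDsw2 hD2
    rw [hqs] at hDyw2 e2
    -- y⊕w = p₀⊕q₀ = q₀⊕p₀ = y⊕w2
    have e3 : A.oplus y w = A.oplus y w2 := by
      rw [e1, hrw, e2, hsw2, A.oplus_comm _ _ hDpq]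
    have hww2 : w = w2 := A.cancel_left hDyw hDyw2 e3
    have hwc' : A.le w (A.compl c) := A.le_trans' (by rw [← hrw]; exact A.le_oplus_right hDrw) hqc'
    have hwc : A.le w c := by
      rw [hww2]
      exact A.le_trans' (by rw [← hsw2]; exact A.le_oplus_right hDsw2) hpc
    have hw0 : w = A.zero :=
      A.le_zero (A.le_inf (A.central_sharp hc) hwc hwc')
    rw [← hrw, hw0, A.oplus_zero, hpr]
  have e1 : p = p₀ := A.inf_unique hp hp₀
  have e2 : q = q₀ := A.inf_unique hq hq₀
  rw [e1, e2]; exact key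

lemma sup_split {c u v : E} (hc : A.Central c) (hu : A.le u c) (hv : A.le v (A.compl c)) :
    A.D u v ∧ A.IsSupIn Set.univ {u, v} (A.oplus u v) := by
  have hDuv : A.D u v := A.D_of_le_compl (A.le_trans' hu (A.le_compl_swap hv))
  refine ⟨hDuv, A.mkSup (A.le_oplus_left hDuv) (A.le_oplus_right hDuv) ?_⟩
  intro t htu htv
  obtain ⟨p, q, hp, hq, _⟩ := hc t
  obtain ⟨hDpq, hsum⟩ := A.central_decomp hc hp hq
  have h1 : A.le u p := A.le_inf hp htu hu
  have h2 : A.le v q := A.le_inf hq htv hv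
  have := A.oplus_le_oplus h1 h2 hDpq
  rwa [hsum] at this

lemma central_compl {c : E} (hc : A.Central c) : A.Central (A.compl c) := by
  intro y
  obtain ⟨m₁, m₂, h1, h2, h3⟩ := hc y
  exact ⟨m₂, m₁, h2, by rw [A.compl_compl']; exact h1, by rw [Set.pair_comm]; exact h3⟩

lemma zero_central : A.Central A.zero := by
  intro y
  refine ⟨A.zero, y, ?_, ?_, ?_⟩
  · exact A.mkInf (A.zero_le y) (A.le_refl' _) (fun z _ hz => hz)
  · rw [A.compl_zero]
    exact A.mkInf (A.le_refl' y) (A.le_one y) (fun z hz _ => hz)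
  · exact A.mkSup (A.zero_le y) (A.le_refl' y) (fun z _ hz => hz)

lemma central_principal {c u v : E} (hc : A.Central c) (hu : A.le u c) (hv : A.le v c)
    (hD : A.D u v) : A.le (A.oplus u v) c := by
  obtain ⟨m, q, hm, hq, _⟩ := hc (A.oplus u v)
  obtain ⟨hDmq, hsum⟩ := A.central_decomp hc hm hq
  have hum : A.le u m := A.le_inf hm (A.le_oplus_left hD) hu
  obtain ⟨s, hDus, hus⟩ := hum
  have h1 : A.D (A.oplus u s) q := by rw [hus]; exact hDmq
  obtain ⟨h2, h3, h4⟩ := A.assoc u s q hDus h1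
  have h5 : A.oplus u (A.oplus s q) = A.oplus u v := by rw [← h4, hus, hsum]
  have h6 : A.oplus s q = v := A.cancel_left h3 hD h5
  have hqv : A.le q v := by rw [← h6]; exact A.le_oplus_right h2
  have hq0 : q = A.zero := A.le_zero
    (A.le_inf (A.central_sharp hc) (A.le_trans' hqv hv) (A.inf_le_right hq))
  have : A.le m c := A.inf_le_right hm
  rwa [← hsum, hq0, A.oplus_zero]

lemma claimW {c d w : E} (hc : A.Central c) (hDcd : A.D c d)
    (h1 : A.le w (A.oplus c d)) (h2 : A.le w (A.compl c)) : A.le w d := by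
  obtain ⟨hDcw, hsup⟩ := A.sup_split hc (A.le_refl' c) h2
  have h3 : A.le (A.oplus c w) (A.oplus c d) :=
    A.sup_le hsup (A.le_oplus_left hDcd) h1
  exact A.cancel_le_left hDcw hDcd h3

lemma meet_oplus {c d : E} (hc : A.Central c) (hd : A.Central d) (hDcd : A.D c d)
    {y p s : E} (hpy : A.IsInfIn Set.univ {y, c} p) (hsy : A.IsInfIn Set.univ {y, d} s) :
    A.D p s ∧ A.IsInfIn Set.univ {y, A.oplus c d} (A.oplus p s) := by
  have hdc' : A.le d (A.compl c) := A.le_compl_of_D hDcd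
  have hDps : A.D p s := A.D_of_le_compl
    (A.le_trans' (A.inf_le_right hpy) (A.le_compl_swap (A.le_trans' (A.inf_le_right hsy) hdc')))
  obtain ⟨p₀, q, hp₀, hq, _⟩ := hc y
  obtain ⟨hDpq, hsum⟩ := A.central_decomp hc hpy hq
  have hsq : A.le s q := A.le_inf hq (A.inf_le_left hsy) (A.le_trans' (A.inf_le_right hsy) hdc')
  refine ⟨hDps, A.mkInf ?_ ?_ ?_⟩
  · have := A.oplus_le_oplus_right hsq hDpq
    rwa [hsum] at this
  · exact A.oplus_le_oplus (A.inf_le_right hpy) (A.inf_le_right hsy) hDcd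
  · intro z hzy hzcd
    obtain ⟨zc, zq, hzc, hzq, _⟩ := hc z
    obtain ⟨hDz, hzsum⟩ := A.central_decomp hc hzc hzq
    have h1 : A.le zc p := A.le_inf hpy (A.le_trans' (A.inf_le_left hzc) hzy) (A.inf_le_right hzc)
    have h2 : A.le zq d := A.claimW hc hDcd (A.le_trans' (A.inf_le_left hzq) hzcd)
      (A.inf_le_right hzq)
    have h3 : A.le zq s := A.le_inf hsy (A.le_trans' (A.inf_le_left hzq) hzy) h2
    have := A.oplus_le_oplus h1 h3 hDps
    rwa [hzsum] at this

lemma central_oplus {c d : E} (hc : A.Central c) (hd : A.Central d) (hDcd : A.D c d) :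
    A.Central (A.oplus c d) := by
  have hdc' : A.le d (A.compl c) := A.le_compl_of_D hDcd
  -- compl c = d ⊕ compl (c⊕d)
  obtain ⟨hDde, hDce, hec⟩ := A.assoc c d (A.compl (A.oplus c d)) hDcd (A.D_compl _)
  have hce : A.oplus c (A.oplus d (A.compl (A.oplus c d))) = A.one := by
    rw [← hec, A.oplus_compl]
  have he : A.oplus d (A.compl (A.oplus c d)) = A.compl c := A.compl_unique _ _ hDce hce
  intro y
  obtain ⟨p, q, hp, hq, _⟩ := hc y
  obtain ⟨hDpq, hsum⟩ := A.central_decomp hc hp hq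
  obtain ⟨s, t, hs, ht, _⟩ := hd q
  obtain ⟨hDst, hqsum⟩ := A.central_decomp hd hs ht
  -- inf {y, d} s
  have hsy : A.IsInfIn Set.univ {y, d} s := by
    refine A.mkInf (A.le_trans' (A.inf_le_left hs) (A.inf_le_left hq)) (A.inf_le_right hs) ?_
    intro z hzy hzd
    exact A.le_inf hs (A.le_inf hq hzy (A.le_trans' hzd hdc')) hzd
  obtain ⟨hDps, hm⟩ := A.meet_oplus hc hd hDcd hp hsy
  -- inf {y, compl (c⊕d)} t
  have hte : A.le t (A.compl (A.oplus c d)) := by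
    have htc' : A.le t (A.compl c) := A.le_trans' (A.inf_le_left ht) (A.inf_le_right hq)
    have htd' : A.le t (A.compl d) := A.inf_le_right ht
    have hDtd : A.D t d := A.D_of_le_compl htd'
    have h1 : A.le (A.oplus t d) (A.compl c) :=
      A.central_principal (A.central_compl hc) htc' hdc' hDtd
    rw [← he] at h1
    have h2 : A.le (A.oplus d t) (A.oplus d (A.compl (A.oplus c d))) := by
      rwa [A.oplus_comm _ _ hDtd] at h1
    exact A.cancel_le_left (A.D_comm _ _ hDtd) hDde h2
  have hty : A.le t y := A.le_trans' (A.inf_le_left ht) (A.inf_le_left hq)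
  have hnt : A.IsInfIn Set.univ {y, A.compl (A.oplus c d)} t := by
    refine A.mkInf hty hte ?_
    intro z hzy hze
    have hzc' : A.le z (A.compl c) := A.le_trans' hze (by rw [← he]; exact A.le_oplus_right hDde)
    have hzd' : A.le z (A.compl d) := A.le_trans' hze (A.le_compl_of_D hDde)
    exact A.le_inf ht (A.le_inf hq hzy hzc') hzd'
  refine ⟨A.oplus p s, t, hm, hnt, A.mkSup (A.inf_le_left hm) hty ?_⟩
  intro u hmu htu
  obtain ⟨uc, uq, huc, huq, _⟩ := hc u
  obtain ⟨hDuu, husum⟩ := A.central_decomp hc huc huq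
  have hpu : A.le p uc := A.le_inf huc (A.le_trans' (A.le_oplus_left hDps) hmu) (A.inf_le_right hp)
  have hsu : A.le s uq := A.le_inf huq (A.le_trans' (A.le_oplus_right hDps) hmu)
    (A.le_trans' (A.inf_le_right hsy) hdc')
  have htuq : A.le t uq := A.le_inf huq htu
    (A.le_trans' (A.inf_le_left ht) (A.inf_le_right hq))
  have hsupst := (A.sup_split hd (A.inf_le_right hs) (A.inf_le_right ht)).2
  rw [hqsum] at hsupst
  have hqu : A.le q uq := A.sup_le hsupst hsu htuq
  have := A.oplus_le_oplus hpu hqu hDuu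
  rw [husum] at this
  rwa [hsum] at this

lemma central_inf {c d g : E} (hc : A.Central c) (hd : A.Central d)
    (hg : A.IsInfIn Set.univ {c, d} g) : A.Central g := by
  obtain ⟨g₀, h, hg₀, hh, _⟩ := hd c
  obtain ⟨hDgh, hcsum⟩ := A.central_decomp hd hg hh
  -- compl g = h ⊕ compl c
  obtain ⟨hDhc', hDgc', hgc⟩ := A.assoc g h (A.compl c) hDgh (by rw [hcsum]; exact A.D_compl c)
  have h1 : A.oplus g (A.oplus h (A.compl c)) = A.one := by
    rw [← hgc, hcsum, A.oplus_compl]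
  have hgcompl : A.oplus h (A.compl c) = A.compl g := A.compl_unique _ _ hDgc' h1
  have hgc_le : A.le g c := A.inf_le_left hg
  have hgd_le : A.le g d := A.inf_le_right hg
  have hhc : A.le h c := A.inf_le_left hh
  have hhd' : A.le h (A.compl d) := A.inf_le_right hh
  intro y
  obtain ⟨p, q, hp, hq, _⟩ := hc y
  obtain ⟨hDpq, hysum⟩ := A.central_decomp hc hp hq
  obtain ⟨a, b, ha, hb, _⟩ := hd p
  obtain ⟨hDab, hpsum⟩ := A.central_decomp hd ha hb
  -- inf {y, g} a
  have hay : A.le a y := A.le_trans' (A.inf_le_left ha) (A.inf_le_left hp)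
  have hinfa : A.IsInfIn Set.univ {y, g} a := by
    refine A.mkInf hay (A.le_inf hg (A.le_trans' (A.inf_le_left ha) (A.inf_le_right hp))
      (A.inf_le_right ha)) ?_
    intro z hzy hzg
    exact A.le_inf ha (A.le_inf hp hzy (A.le_trans' hzg hgc_le)) (A.le_trans' hzg hgd_le)
  -- n := b ⊕ q
  have hDbq : A.D b q := A.D_of_le_compl
    (A.le_trans' (A.le_trans' (A.inf_le_left hb) (A.inf_le_right hp))
      (A.le_compl_swap (A.inf_le_right hq)))
  have hyabq : A.oplus a (A.oplus b q) = y := by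
    have hD1 : A.D (A.oplus a b) q := by rw [hpsum]; exact hDpq
    obtain ⟨u1, u2, u3⟩ := A.assoc a b q hDab hD1
    rw [← u3, hpsum, hysum]
  have hDn : A.D a (A.oplus b q) := by
    have hD1 : A.D (A.oplus a b) q := by rw [hpsum]; exact hDpq
    exact (A.assoc a b q hDab hD1).2.1
  have hny : A.le (A.oplus b q) y := by rw [← hyabq]; exact A.le_oplus_right hDn
  have hinfn : A.IsInfIn Set.univ {y, A.compl g} (A.oplus b q) := by
    refine A.mkInf hny ?_ ?_
    · rw [← hgcompl]
      exact A.oplus_le_oplus (A.le_inf hh (A.le_trans' (A.inf_le_left hb) (A.inf_le_right hp))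
        (A.inf_le_right hb)) (A.inf_le_right hq) hDhc'
    · intro z hzy hzg'
      obtain ⟨zc, zq, hzc, hzq, _⟩ := hc z
      obtain ⟨hDz, hzsum⟩ := A.central_decomp hc hzc hzq
      have hzqq : A.le zq q := A.le_inf hq (A.le_trans' (A.inf_le_left hzq) hzy)
        (A.inf_le_right hzq)
      -- zc ≤ h via claimW with central compl c
      have hDc'h : A.D (A.compl c) h := A.D_comm _ _ (A.D_compl_of_le hhc)
      have hzch : A.le zc h := by
        apply A.claimW (A.central_compl hc) hDc'h
        · refine A.le_trans' (A.inf_le_left hzc) ?_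
          rw [← A.oplus_comm _ _ hDhc', hgcompl]
          exact hzg'
        · rw [A.compl_compl']; exact A.inf_le_right hzc
      have hzcb : A.le zc b := A.le_inf hb
        (A.le_inf hp (A.le_trans' (A.inf_le_left hzc) hzy) (A.inf_le_right hzc))
        (A.le_trans' hzch hhd')
      have := A.oplus_le_oplus hzcb hzqq hDbq
      rwa [hzsum] at this
  refine ⟨a, A.oplus b q, hinfa, hinfn, A.mkSup hay hny ?_⟩
  intro u hau hnu
  have hbu : A.le b u := A.le_trans' (A.le_oplus_left hDbq) hnu
  have hqu : A.le q u := A.le_trans' (A.le_oplus_right hDbq) hnu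
  obtain ⟨ud, ud', hud, hud', _⟩ := hd u
  obtain ⟨hDud, hdsum⟩ := A.central_decomp hd hud hud'
  have hap : A.le a ud := A.le_inf hud hau (A.inf_le_right ha)
  have hbp : A.le b ud' := A.le_inf hud' hbu (A.inf_le_right hb)
  have hpu : A.le p u := by
    have := A.oplus_le_oplus hap hbp hDud
    rwa [hpsum, hdsum] at this
  obtain ⟨uc, uq, huc, huq, _⟩ := hc u
  obtain ⟨hDuc, husum⟩ := A.central_decomp hc huc huq
  have hpuc : A.le p uc := A.le_inf huc hpu (A.inf_le_right hp)
  have hquq : A.le q uq := A.le_inf huq hqu (A.inf_le_right hq)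
  have := A.oplus_le_oplus hpuc hquq hDuc
  rwa [husum, hysum] at this

/-! ### Finite sums -/

lemma sumdef_nil_eq {s : E} (h : A.SumDef [] s) : s = A.zero := by cases h; rfl

lemma sumdef_cons_inv {x : E} {L : List E} {s : E} (h : A.SumDef (x :: L) s) :
    ∃ t, A.SumDef L t ∧ A.D x t ∧ s = A.oplus x t := by
  cases h with
  | cons h hD => exact ⟨_, h, hD, rfl⟩

lemma sumdef_central : ∀ {L : List E} {s : E}, A.SumDef L s →
    (∀ a ∈ L, A.Central a) → A.Central s := by
  intro L
  induction L with
  | nil => intro s h _; rw [A.sumdef_nil_eq h]; exact A.zero_central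
  | cons a L ih =>
    intro s h hcent
    obtain ⟨t, ht, hD, rfl⟩ := A.sumdef_cons_inv h
    exact A.central_oplus (hcent a (List.mem_cons_self))
      (ih ht (fun b hb => hcent b (List.mem_cons_of_mem a hb))) hD

lemma sumdef_perm {l₁ l₂ : List E} (hperm : l₁.Perm l₂) :
    ∀ {s : E}, A.SumDef l₁ s → A.SumDef l₂ s := by
  induction hperm with
  | nil => exact fun h => h
  | cons a p ih =>
    intro s h
    obtain ⟨t, ht, hD, rfl⟩ := A.sumdef_cons_inv h
    exact EffectAlgebra.SumDef.cons (ih ht) hD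
  | swap a b l =>
    intro s h
    obtain ⟨t, ht, hD1, rfl⟩ := A.sumdef_cons_inv h
    obtain ⟨u, hu, hD2, rfl⟩ := A.sumdef_cons_inv ht
    -- s = b ⊕ (a ⊕ u), want SumDef (a :: b :: l) with value b⊕(a⊕u)
    obtain ⟨hDba, hDbau, e1⟩ := A.assoc' b a u hD2 hD1
    have e2 : A.oplus (A.oplus b a) u = A.oplus (A.oplus a b) u := by
      rw [A.oplus_comm _ _ hDba]
    have hDab : A.D a b := A.D_comm _ _ hDba
    have hDabu : A.D (A.oplus a b) u := by rwa [A.oplus_comm _ _ hDba] at hDbau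
    obtain ⟨hD3, hD4, e3⟩ := A.assoc a b u hDab hDabu
    have : A.oplus b (A.oplus a u) = A.oplus a (A.oplus b u) := by
      rw [← e1, e2, e3]
    rw [this]
    exact EffectAlgebra.SumDef.cons (EffectAlgebra.SumDef.cons hu hD3) hD4
  | trans p₁ p₂ ih₁ ih₂ => exact fun h => ih₂ (ih₁ h)

lemma sumdef_meet {ι : Type v} (c p : ι → E) (hc : ∀ i, A.Central (c i)) (y : E)
    (hp : ∀ i, A.IsInfIn Set.univ {y, c i} (p i)) :
    ∀ (l : List ι) (s m : E), A.SumDef (l.map c) s → A.SumDef (l.map p) m →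
      A.IsInfIn Set.univ {y, s} m := by
  intro l
  induction l with
  | nil =>
    intro s m hs hm
    rw [List.map_nil] at hs hm
    rw [A.sumdef_nil_eq hs, A.sumdef_nil_eq hm]
    exact A.mkInf (A.zero_le y) (A.le_refl' _) (fun z _ h2 => h2)
  | cons i l ih =>
    intro s m hs hm
    rw [List.map_cons] at hs hm
    obtain ⟨s', hs', hD1, rfl⟩ := A.sumdef_cons_inv hs
    obtain ⟨m', hm', hD2, rfl⟩ := A.sumdef_cons_inv hm
    have hcent_s' : A.Central s' := A.sumdef_central hs' (by
      intro a ha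
      obtain ⟨j, _, rfl⟩ := List.mem_map.1 ha
      exact hc j)
    exact (A.meet_oplus (hc i) hcent_s' hD1 (hp i) (ih s' m' hs' hm')).2

lemma sumdef_meet_zero {x : E} : ∀ {L : List E} {s : E}, A.SumDef L s →
    (∀ a ∈ L, A.Central a ∧ ∀ w, A.le w x → A.le w a → w = A.zero) →
    ∀ z, A.le z x → A.le z s → z = A.zero := by
  intro L
  induction L with
  | nil =>
    intro s h _ z _ hzs
    rw [A.sumdef_nil_eq h] at hzs
    exact A.le_zero hzs
  | cons a L ih =>
    intro s h hprop z hzx hzs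
    obtain ⟨t, ht, hD, rfl⟩ := A.sumdef_cons_inv h
    have hca : A.Central a := (hprop a (List.mem_cons_self)).1
    obtain ⟨za, za', hza, hza', _⟩ := hca z
    obtain ⟨hDz, hzsum⟩ := A.central_decomp hca hza hza'
    have hza0 : za = A.zero := (hprop a (List.mem_cons_self)).2 za
      (A.le_trans' (A.inf_le_left hza) hzx) (A.inf_le_right hza)
    have hzca : A.le z (A.compl a) := by
      rw [← hzsum, hza0, A.zero_oplus]
      exact A.inf_le_right hza'
    have hzt : A.le z t := A.claimW hca hD hzs hzca
    exact ih ht (fun b hb => hprop b (List.mem_cons_of_mem a hb)) z hzx hzt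

lemma le_compl_of_lb_compl {S : Set E} {v z : E} (hv : A.IsSupIn Set.univ S v)
    (h : ∀ s ∈ S, A.le z (A.compl s)) : A.le z (A.compl v) :=
  A.le_compl_swap (hv.2.2 _ trivial (fun s hs => A.le_compl_swap (h s hs)))

lemma ZLEM (hdom : A.SharplyDominating) {S : Set E} {v t : E}
    (hv : A.IsSupIn Set.univ S v) (hScen : ∀ s ∈ S, A.Central s)
    (htv : A.le t v) (ht : ∀ s ∈ S, A.le t (A.compl s)) : t = A.zero := by
  obtain ⟨w, hw_sharp, htw, hinf, _⟩ := hdom t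
  have hws : ∀ s ∈ S, A.le w (A.compl s) := fun s hs =>
    hinf.2.1 (A.compl s) ⟨A.central_sharp (A.central_compl (hScen s hs)), ht s hs⟩
  have hwv : A.le w (A.compl v) := A.le_compl_of_lb_compl hv hws
  have hvw' : A.le v (A.compl w) := A.le_compl_swap hwv
  exact A.le_zero (A.le_inf hw_sharp htw (A.le_trans' htv hvw'))

lemma le_dual {c₀ y m_l q_l m n : E} (hc₀ : A.Central c₀)
    (hm_l : A.IsInfIn Set.univ {y, c₀} m_l) (hq_l : A.IsInfIn Set.univ {y, A.compl c₀} q_l)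
    (h1 : A.le m_l m) (hDmn : A.D m n) (hmn : A.oplus m n = y) : A.le n q_l := by
  obtain ⟨w, hD, hw, hnw⟩ := A.sandwich hDmn hmn h1
  obtain ⟨hD2, hsum2⟩ := A.central_decomp hc₀ hm_l hq_l
  have : w = q_l := A.cancel_left hD hD2 (hw.trans hsum2.symm)
  rw [← this]; exact hnw

/-! ### Orthosums of central families -/

lemma finiteSums_central {ι : Type v} {c : ι → E} (hc : ∀ i, A.Central (c i)) :
    ∀ s ∈ A.finiteSums c, A.Central s := by
  rintro s ⟨l, hnd, hsd⟩
  refine A.sumdef_central hsd ?_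
  rintro a ha
  obtain ⟨j, _, rfl⟩ := List.mem_map.1 ha
  exact hc j

lemma absorb {ι : Type u} {c : ι → E} (hc : ∀ i, A.Central (c i)) {v : E}
    (hv : A.HasOrthoSum c v) (hdom : A.SharplyDominating) (hSO : A.SharplyOrthocomplete)
    {z u : E} (hzv : A.le z v)
    (hu : ∀ (l : List ι), l.Nodup → ∀ s w, A.SumDef (l.map c) s →
      A.IsInfIn Set.univ {z, s} w → A.le w u) : A.le z u := by
  have hmeets : ∀ i, ∃ m, A.IsInfIn Set.univ {z, c i} m := fun i => by
    obtain ⟨m₁, m₂, h1, _, _⟩ := hc i z; exact ⟨m₁, h1⟩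
  choose pz hpz using hmeets
  obtain ⟨r, hrOrth, hrSup⟩ := hSO ι pz c (fun i => A.central_sharp (hc i)) hv.1
    (fun i => A.inf_le_right (hpz i))
  have hrz : A.le r z := by
    refine hrSup.2.2 z trivial ?_
    rintro w ⟨l, hnd, hsd⟩
    obtain ⟨s, hsdc⟩ := hv.1 l hnd
    exact A.inf_le_left (A.sumdef_meet c pz hc z hpz l s w hsdc hsd)
  have hru : A.le r u := by
    refine hrSup.2.2 u trivial ?_
    rintro w ⟨l, hnd, hsd⟩
    obtain ⟨s, hsdc⟩ := hv.1 l hnd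
    exact hu l hnd s w hsdc (A.sumdef_meet c pz hc z hpz l s w hsdc hsd)
  obtain ⟨t, hDrt, hrt⟩ := hrz
  have htc : ∀ s ∈ A.finiteSums c, A.le t (A.compl s) := by
    rintro s ⟨l, hnd, hsdc⟩
    obtain ⟨w, hsdz⟩ := hrOrth l hnd
    have hinfw := A.sumdef_meet c pz hc z hpz l s w hsdc hsdz
    have hcens : A.Central s := A.finiteSums_central hc s ⟨l, hnd, hsdc⟩
    obtain ⟨m1, ql, hm1, hql, _⟩ := hcens z
    have hwr : A.le w r := hrSup.2.1 w ⟨l, hnd, hsdz⟩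
    exact A.le_trans' (A.le_dual hcens hinfw hql hwr hDrt hrt) (A.inf_le_right hql)
  have htz : A.le t z := by rw [← hrt]; exact A.le_oplus_right hDrt
  have ht0 : t = A.zero := A.ZLEM hdom hv.2 (A.finiteSums_central hc)
    (A.le_trans' htz hzv) htc
  have hzr : z = r := by rw [← hrt, ht0, A.oplus_zero]
  rw [hzr]; exact hru

lemma orthosum_central {ι : Type u} {c : ι → E} (hc : ∀ i, A.Central (c i)) {v : E}
    (hv : A.HasOrthoSum c v) (hdom : A.SharplyDominating) (hSO : A.SharplyOrthocomplete) :
    A.Central v := by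
  have hScen := A.finiteSums_central hc
  intro y
  have hmeets : ∀ i, ∃ m, A.IsInfIn Set.univ {y, c i} m := fun i => by
    obtain ⟨m₁, m₂, h1, _, _⟩ := hc i y; exact ⟨m₁, h1⟩
  choose p hp using hmeets
  obtain ⟨m, hmOrth, hmSup⟩ := hSO ι p c (fun i => A.central_sharp (hc i)) hv.1
    (fun i => A.inf_le_right (hp i))
  have hmy : A.le m y := by
    refine hmSup.2.2 y trivial ?_
    rintro w ⟨l, hnd, hsd⟩
    obtain ⟨s, hsdc⟩ := hv.1 l hnd
    exact A.inf_le_left (A.sumdef_meet c p hc y hp l s w hsdc hsd)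
  have hmv : A.le m v := by
    refine hmSup.2.2 v trivial ?_
    rintro w ⟨l, hnd, hsd⟩
    obtain ⟨s, hsdc⟩ := hv.1 l hnd
    exact A.le_trans' (A.inf_le_right (A.sumdef_meet c p hc y hp l s w hsdc hsd))
      (hv.2.2.1 s ⟨l, hnd, hsdc⟩)
  obtain ⟨n, hDmn, hmn⟩ := hmy
  have hmy : A.le m y := ⟨n, hDmn, hmn⟩
  have hnc : ∀ s ∈ A.finiteSums c, A.le n (A.compl s) := by
    rintro s ⟨l, hnd, hsdc⟩
    obtain ⟨w, hsdp⟩ := hmOrth l hnd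
    have hinfw := A.sumdef_meet c p hc y hp l s w hsdc hsdp
    obtain ⟨m1, ql, hm1, hql, _⟩ := hScen s ⟨l, hnd, hsdc⟩ y
    have hwm : A.le w m := hmSup.2.1 w ⟨l, hnd, hsdp⟩
    exact A.le_trans' (A.le_dual (hScen s ⟨l, hnd, hsdc⟩) hinfw hql hwm hDmn hmn)
      (A.inf_le_right hql)
  have hny : A.le n y := by rw [← hmn]; exact A.le_oplus_right hDmn
  have hnv' : A.le n (A.compl v) := A.le_compl_of_lb_compl hv.2 hnc
  have hinfm : A.IsInfIn Set.univ {y, v} m := by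
    refine A.mkInf hmy hmv ?_
    intro z hzy hzv
    refine A.absorb hc hv hdom hSO hzv ?_
    intro l hnd s w hsdc hinfw
    obtain ⟨ml, hsdp⟩ := hmOrth l hnd
    have hinfml := A.sumdef_meet c p hc y hp l s ml hsdc hsdp
    have hwml : A.le w ml := A.le_inf hinfml (A.le_trans' (A.inf_le_left hinfw) hzy)
      (A.inf_le_right hinfw)
    exact A.le_trans' hwml (hmSup.2.1 ml ⟨l, hnd, hsdp⟩)
  have hinfn : A.IsInfIn Set.univ {y, A.compl v} n := by
    refine A.mkInf hny hnv' ?_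
    intro z hzy hzv'
    have hDmz : A.D m z := A.D_of_le_compl (A.le_trans' hmv (A.le_compl_swap hzv'))
    obtain ⟨yz, hDzyz, hzyz⟩ := hzy
    have hzy : A.le z y := ⟨yz, hDzyz, hzyz⟩
    have hm_le : A.le m yz := by
      refine hmSup.2.2 yz trivial ?_
      rintro w ⟨l, hnd, hsdp⟩
      obtain ⟨s, hsdc⟩ := hv.1 l hnd
      have hinfw := A.sumdef_meet c p hc y hp l s w hsdc hsdp
      obtain ⟨m1, ql, hm1, hql, _⟩ := hScen s ⟨l, hnd, hsdc⟩ y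
      have hzql : A.le z ql := A.le_inf hql hzy
        (A.le_trans' hzv' (A.compl_le_compl (hv.2.2.1 s ⟨l, hnd, hsdc⟩)))
      obtain ⟨hD2, hsum2⟩ := A.central_decomp (hScen s ⟨l, hnd, hsdc⟩) hinfw hql
      have h1 : A.le (A.oplus w z) y := by
        rw [← hsum2]; exact A.oplus_le_oplus_right hzql hD2
      have hDwz : A.D w z := A.D_of_le_right hzql hD2
      have hDyzz : A.D yz z := A.D_comm _ _ hDzyz
      have h2 : A.le (A.oplus w z) (A.oplus yz z) := by
        have e : A.oplus yz z = y := by rw [A.oplus_comm _ _ hDyzz, hzyz]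
        rw [e]; exact h1
      exact A.cancel_le_right hDwz hDyzz h2
    have h3 : A.le (A.oplus m z) y := by
      have := A.oplus_le_oplus_left hm_le (A.D_comm _ _ hDzyz)
      rwa [A.oplus_comm _ _ (A.D_comm _ _ hDzyz), hzyz] at this
    rw [← hmn] at h3
    exact A.cancel_le_left hDmz hDmn h3
  refine ⟨m, n, hinfm, hinfn, A.mkSup hmy hny ?_⟩
  intro u hmu hnu
  obtain ⟨un, hDnun, hnun⟩ := hnu
  have hmun : A.le m un := by
    refine hmSup.2.2 un trivial ?_
    rintro w ⟨l, hnd, hsdp⟩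
    obtain ⟨s, hsdc⟩ := hv.1 l hnd
    have hinfw := A.sumdef_meet c p hc y hp l s w hsdc hsdp
    obtain ⟨us, usq, hus, husq, _⟩ := hScen s ⟨l, hnd, hsdc⟩ u
    obtain ⟨hDu, husum⟩ := A.central_decomp (hScen s ⟨l, hnd, hsdc⟩) hus husq
    have hw_us : A.le w us := A.le_inf hus
      (A.le_trans' (hmSup.2.1 w ⟨l, hnd, hsdp⟩) hmu) (A.inf_le_right hinfw)
    have hn_usq : A.le n usq := A.le_inf husq ⟨un, hDnun, hnun⟩ (hnc s ⟨l, hnd, hsdc⟩)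
    have hw_n_u : A.le (A.oplus w n) u := by
      have := A.oplus_le_oplus hw_us hn_usq hDu
      rwa [husum] at this
    have hDwn : A.D w n := A.D_of_le_left (hmSup.2.1 w ⟨l, hnd, hsdp⟩) hDmn
    have hDunn : A.D un n := A.D_comm _ _ hDnun
    have h4 : A.le (A.oplus w n) (A.oplus un n) := by
      have e : A.oplus un n = u := by rw [A.oplus_comm _ _ hDunn, hnun]
      rw [e]; exact hw_n_u
    exact A.cancel_le_right hDwn hDunn h4
  have h5 : A.le (A.oplus m n) (A.oplus un n) :=
    A.oplus_le_oplus_left hmun (A.D_comm _ _ hDnun)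
  rwa [hmn, A.oplus_comm _ _ (A.D_comm _ _ hDnun), hnun] at h5

/-! ### The central cover -/

lemma central_cover (hSO : A.SharplyOrthocomplete) (hdom : A.SharplyDominating) (x : E) :
    ∃ γ, A.Central γ ∧ A.le x γ ∧ ∀ d, A.Central d → A.le x d → A.le γ d := by
  classical
  set 𝒢 : Set (Set E) :=
    {M | (∀ d ∈ M, A.Central d ∧ ∀ w, A.le w x → A.le w d → w = A.zero) ∧
      ∀ l : List E, l.Nodup → (∀ a ∈ l, a ∈ M) → ∃ s, A.SumDef l s} with h𝒢
  have hempty : (∅ : Set E) ∈ 𝒢 := by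
    constructor
    · intro d hd; exact absurd hd (Set.notMem_empty d)
    · intro l _ hmem
      cases l with
      | nil => exact ⟨A.zero, EffectAlgebra.SumDef.nil⟩
      | cons a l => exact absurd (hmem a (List.mem_cons_self)) (Set.notMem_empty a)
  have hchain : ∀ ch ⊆ 𝒢, IsChain (· ⊆ ·) ch → ch.Nonempty →
      ∃ ub ∈ 𝒢, ∀ s ∈ ch, s ⊆ ub := by
    intro ch hchS hchain hne
    refine ⟨⋃₀ ch, ⟨?_, ?_⟩, fun s hs => Set.subset_sUnion_of_mem hs⟩
    · rintro d ⟨Mi, hMi, hdMi⟩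
      exact (hchS hMi).1 d hdMi
    · intro l hnd hmem
      have key : ∃ Mi ∈ ch, ∀ a ∈ l, a ∈ Mi := by
        clear hnd
        induction l with
        | nil =>
          obtain ⟨M0, hM0⟩ := hne
          exact ⟨M0, hM0, by simp⟩
        | cons a l ih =>
          obtain ⟨M1, hM1, hall⟩ := ih (fun b hb => hmem b (List.mem_cons_of_mem a hb))
          obtain ⟨M2, hM2, haM2⟩ := hmem a (List.mem_cons_self)
          rcases hchain.total hM1 hM2 with h | h
          · exact ⟨M2, hM2, by
              intro b hb
              rcases List.mem_cons.1 hb with rfl | hb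
              · exact haM2
              · exact h (hall b hb)⟩
          · exact ⟨M1, hM1, by
              intro b hb
              rcases List.mem_cons.1 hb with rfl | hb
              · exact h haM2
              · exact hall b hb⟩
      obtain ⟨Mi, hMi, hall⟩ := key
      exact (hchS hMi).2 l hnd hall
  obtain ⟨M, -, hMmax⟩ := zorn_subset_nonempty 𝒢 hchain ∅ hempty
  have hM𝒢 : M ∈ 𝒢 := hMmax.1
  have hcent : ∀ i : ↥M, A.Central i.val := fun i => (hM𝒢.1 i.val i.2).1
  have horth : A.Orthogonal (Subtype.val : ↥M → E) := by
    intro l hnd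
    refine hM𝒢.2 (l.map Subtype.val) (hnd.map Subtype.val_injective) ?_
    rintro a ha
    obtain ⟨⟨b, hb⟩, _, rfl⟩ := List.mem_map.1 ha
    exact hb
  obtain ⟨v, hvOrth, hvSup⟩ := hSO ↥M Subtype.val Subtype.val
    (fun i => A.central_sharp (hcent i)) horth (fun i => A.le_refl' _)
  have hHOS : A.HasOrthoSum (Subtype.val : ↥M → E) v := ⟨hvOrth, hvSup⟩
  have hvCen : A.Central v := A.orthosum_central hcent hHOS hdom hSO
  obtain ⟨m₀, q₀x, hm₀, hq₀x, _⟩ := hvCen x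
  have hm₀0 : m₀ = A.zero := by
    apply A.le_zero
    refine A.absorb hcent hHOS hdom hSO (A.inf_le_right hm₀) ?_
    intro l hnd s w hsdc hinfw
    have hprop : ∀ a ∈ l.map (Subtype.val : ↥M → E), A.Central a ∧
        ∀ w', A.le w' x → A.le w' a → w' = A.zero := by
      rintro a ha
      obtain ⟨⟨b, hb⟩, _, rfl⟩ := List.mem_map.1 ha
      exact hM𝒢.1 b hb
    have hw0 : w = A.zero := A.sumdef_meet_zero hsdc hprop w
      (A.le_trans' (A.inf_le_left hinfw) (A.inf_le_left hm₀)) (A.inf_le_right hinfw)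
    rw [hw0]; exact A.le_refl' _
  have hxv' : A.le x (A.compl v) := by
    obtain ⟨hD0, hsum0⟩ := A.central_decomp hvCen hm₀ hq₀x
    rw [hm₀0, A.zero_oplus] at hsum0
    rw [← hsum0]; exact A.inf_le_right hq₀x
  refine ⟨A.compl v, A.central_compl hvCen, hxv', ?_⟩
  intro d hd hxd
  obtain ⟨e, e2, he, he2, _⟩ := (A.central_compl hvCen) (A.compl d)
  rw [A.compl_compl' v] at he2
  have heCen : A.Central e := A.central_inf (A.central_compl hd) (A.central_compl hvCen) he
  have he0 : e = A.zero := by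
    by_contra hne
    have heM : e ∉ M := by
      intro heM
      have hsd : A.SumDef [e] (A.oplus e A.zero) :=
        EffectAlgebra.SumDef.cons EffectAlgebra.SumDef.nil (A.D_comm _ _ (A.D_zero e))
      have hmem : A.oplus e A.zero ∈ A.finiteSums (Subtype.val : ↥M → E) :=
        ⟨[⟨e, heM⟩], by simp, by simpa using hsd⟩
      have hev : A.le e v := by
        have := hvSup.2.1 _ hmem
        rwa [A.oplus_zero] at this
      exact hne (A.le_zero (A.le_inf (A.central_sharp hvCen) hev (A.inf_le_right he)))
    have hN : insert e M ∈ 𝒢 := by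
      constructor
      · rintro d₀ hd₀
        rw [Set.mem_insert_iff] at hd₀
        rcases hd₀ with rfl | hd₀
        · refine ⟨heCen, ?_⟩
          intro w hwx hwe
          exact A.le_zero (A.le_inf (A.central_sharp hd) (A.le_trans' hwx hxd)
            (A.le_trans' hwe (A.inf_le_left he)))
        · exact hM𝒢.1 d₀ hd₀
      · intro l hnd hall
        by_cases hel : e ∈ l
        · have hperm := List.perm_cons_erase hel
          have herase_mem : ∀ a ∈ l.erase e, a ∈ M := by
            intro a ha
            have haM := hall a (List.mem_of_mem_erase ha)
            rw [Set.mem_insert_iff] at haM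
            rcases haM with rfl | h
            · exact absurd ha hnd.not_mem_erase
            · exact h
          obtain ⟨s', hs'⟩ := hM𝒢.2 (l.erase e) (hnd.erase e) herase_mem
          have hs'v : A.le s' v := by
            have hmem : s' ∈ A.finiteSums (Subtype.val : ↥M → E) := by
              refine ⟨(l.erase e).pmap (fun a h => (⟨a, h⟩ : ↥M)) herase_mem, ?_, ?_⟩
              · apply List.Nodup.of_map Subtype.val
                rw [List.map_pmap]
                simpa using hnd.erase e
              · have hmap : ((l.erase e).pmap (fun a h => (⟨a, h⟩ : ↥M))
                    herase_mem).map Subtype.val = l.erase e := by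
                  simp [List.map_pmap]
                rw [hmap]; exact hs'
            exact hvSup.2.1 _ hmem
          have hDes' : A.D e s' := A.D_of_le_compl
            (A.le_trans' (A.inf_le_right he) (A.compl_le_compl hs'v))
          have hsum : A.SumDef (e :: l.erase e) (A.oplus e s') :=
            EffectAlgebra.SumDef.cons hs' hDes'
          exact ⟨A.oplus e s', A.sumdef_perm hperm.symm hsum⟩
        · refine hM𝒢.2 l hnd ?_
          intro a ha
          have haM := hall a ha
          rw [Set.mem_insert_iff] at haM
          rcases haM with rfl | h
          · exact absurd ha hel
          · exact h
    have hsub : insert e M ⊆ M := hMmax.2 hN (Set.subset_insert e M)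
    exact heM (hsub (Set.mem_insert e M))
  obtain ⟨hDe, hesum⟩ := A.central_decomp hvCen he2 he
  have hdv : A.compl d = e2 := by rw [← hesum, he0, A.oplus_zero]
  have hdv' : A.le (A.compl d) v := by rw [hdv]; exact A.inf_le_right he2
  have := A.compl_le_compl hdv'
  rwa [A.compl_compl'] at this

end EffectAlgebra

/-- A sharply orthocomplete S-dominating effect algebra is centrally dominating
and centrally orthocomplete. -/
theorem stmt11 {E : Type u} (A : EffectAlgebra E)
    (hSO : A.SharplyOrthocomplete) (hSD : A.SDominating) :
    A.CentrallyDominating ∧ A.CentrallyOrthocomplete := by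
  obtain ⟨hdom, hmeet⟩ := hSD
  constructor
  · intro x
    obtain ⟨γ, hγc, hxγ, hmin⟩ := A.central_cover hSO hdom x
    have hLB : A.IsLB {d | A.Central d ∧ A.le x d} γ := fun d hd => hmin d hd.1 hd.2
    have hmem : γ ∈ {d | A.Central d ∧ A.le x d} := ⟨hγc, hxγ⟩
    exact ⟨γ, hγc, hxγ, ⟨trivial, hLB, fun z _ hz => hz γ hmem⟩,
      ⟨hγc, hLB, fun z _ hz => hz γ hmem⟩⟩
  · intro ι x c hc horth hle
    exact hSO ι x c (fun k => A.central_sharp (hc k)) horth hle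
end

section
/- The Chang MV-effect algebra E = {0, a, 2a, 3a, …, (3a)', (2a)', a', 1} is sharply orthocomplete but not complete (indeed not Archimedean). -/
universe u v

/-- The Chang MV-effect algebra on the chain
`0 < a < 2a < ⋯ < (2a)' < a' < 1` (encoded as `ℕ ⊕ ℕ`, with `.inl n = na` and
`.inr n = (na)'`) is sharply orthocomplete but neither complete nor
Archimedean. -/
theorem stmt13 (A : EffectAlgebra (ℕ ⊕ ℕ))
    (hzero : A.zero = Sum.inl 0) (hone : A.one = Sum.inr 0)
    (hcompl : ∀ n : ℕ, A.compl (Sum.inl n) = Sum.inr n ∧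
      A.compl (Sum.inr n) = Sum.inl n)
    (hD : ∀ x y : ℕ ⊕ ℕ, A.D x y ↔
      (match x, y with
        | Sum.inl _, Sum.inl _ => True
        | Sum.inl m, Sum.inr n => m ≤ n
        | Sum.inr m, Sum.inl n => n ≤ m
        | Sum.inr _, Sum.inr _ => False))
    (hoplus : ∀ m n : ℕ,
      A.oplus (Sum.inl m) (Sum.inl n) = Sum.inl (m + n) ∧
      (m ≤ n → A.oplus (Sum.inl m) (Sum.inr n) = Sum.inr (n - m)) ∧
      (n ≤ m → A.oplus (Sum.inr m) (Sum.inl n) = Sum.inr (m - n))) :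
    A.SharplyOrthocomplete ∧ ¬ A.Complete ∧ ¬ A.IsArchimedean := by
  classical
  -- basic order facts
  have hD0 : ∀ y, A.D (Sum.inl 0) y := by
    intro y; rw [hD]; cases y with
    | inl n => trivial
    | inr n => exact Nat.zero_le n
  have hop0 : ∀ y, A.oplus (Sum.inl 0) y = y := by
    intro y; cases y with
    | inl n => simpa using (hoplus 0 n).1
    | inr n => simpa using (hoplus 0 n).2.1 (Nat.zero_le n)
  have hD0' : ∀ y, A.D y (Sum.inl 0) := by
    intro y; rw [hD]; cases y with
    | inl n => trivial
    | inr n => exact Nat.zero_le n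
  have hop0' : ∀ y, A.oplus y (Sum.inl 0) = y := by
    intro y; cases y with
    | inl n => simpa using (hoplus n 0).1
    | inr n => simpa using (hoplus n 0).2.2 (Nat.zero_le n)
  have hle0 : ∀ y, A.le (Sum.inl 0) y := fun y => ⟨y, hD0 y, hop0 y⟩
  have hle_refl : ∀ y, A.le y y := fun y => ⟨Sum.inl 0, hD0' y, hop0' y⟩
  have hle_inl : ∀ m n : ℕ, A.le (Sum.inl m) (Sum.inl n) → m ≤ n := by
    rintro m n ⟨z, hz, he⟩
    cases z with
    | inl k =>
      rw [(hoplus m k).1] at he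
      injection he with h; omega
    | inr k =>
      have hk : m ≤ k := (hD _ _).mp hz
      rw [(hoplus m k).2.1 hk] at he
      exact absurd he (by simp)
  have hle_inr : ∀ m n : ℕ, A.le (Sum.inr m) (Sum.inr n) → n ≤ m := by
    rintro m n ⟨z, hz, he⟩
    cases z with
    | inl k =>
      have hk : k ≤ m := (hD _ _).mp hz
      rw [(hoplus m k).2.2 hk] at he
      injection he with h; omega
    | inr k => exact absurd ((hD _ _).mp hz) (by simp)
  have hle_inr_inl : ∀ m n : ℕ, ¬ A.le (Sum.inr m) (Sum.inl n) := by
    rintro m n ⟨z, hz, he⟩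
    cases z with
    | inl k =>
      have hk : k ≤ m := (hD _ _).mp hz
      rw [(hoplus m k).2.2 hk] at he
      exact absurd he (by simp)
    | inr k => exact absurd ((hD _ _).mp hz) (by simp)
  have hle_inl_inr : ∀ m n : ℕ, A.le (Sum.inl m) (Sum.inr n) := by
    intro m n
    refine ⟨Sum.inr (n + m), ?_, ?_⟩
    · rw [hD]; exact Nat.le_add_left m n
    · rw [(hoplus m (n + m)).2.1 (Nat.le_add_left m n)]
      congr 1; omega
  -- sums
  have hsum_unique : ∀ l s₁, A.SumDef l s₁ → ∀ s₂, A.SumDef l s₂ → s₁ = s₂ := by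
    intro l s₁ h₁
    induction h₁ with
    | nil => intro s₂ h₂; cases h₂; rfl
    | cons h hd ih =>
      intro s₂ h₂
      cases h₂ with
      | cons h' hd' => rw [ih _ h']
  -- sharp elements are 0 or 1
  have hsharp : ∀ w, A.Sharp w → w = Sum.inl 0 ∨ w = Sum.inr 0 := by
    intro w hw
    cases w with
    | inl n =>
      left
      have hlb : A.IsLB {Sum.inl n, A.compl (Sum.inl n)} (Sum.inl n) := by
        intro y hy
        simp only [Set.mem_insert_iff, Set.mem_singleton_iff] at hy
        rcases hy with rfl | rfl
        · exact hle_refl _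
        · rw [(hcompl n).1]; exact hle_inl_inr n n
      have h := hw.2.2 (Sum.inl n) (Set.mem_univ _) hlb
      rw [hzero] at h
      have hn0 : n = 0 := Nat.le_zero.mp (hle_inl n 0 h)
      rw [hn0]
    | inr n =>
      right
      have hlb : A.IsLB {Sum.inr n, A.compl (Sum.inr n)} (Sum.inl n) := by
        intro y hy
        simp only [Set.mem_insert_iff, Set.mem_singleton_iff] at hy
        rcases hy with rfl | rfl
        · exact hle_inl_inr n n
        · rw [(hcompl n).2]; exact hle_refl _
      have h := hw.2.2 (Sum.inl n) (Set.mem_univ _) hlb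
      rw [hzero] at h
      have := hle_inl n 0 h
      have : n = 0 := by omega
      rw [this]
  refine ⟨?_, ?_, ?_⟩
  · -- sharply orthocomplete
    intro ι x w hwsharp horth hxw
    have hw01 : ∀ k, w k = Sum.inl 0 ∨ w k = Sum.inr 0 := fun k => hsharp _ (hwsharp k)
    have hx0 : ∀ k, w k = Sum.inl 0 → x k = Sum.inl 0 := by
      intro k hk
      have hx := hxw k
      rw [hk] at hx
      cases hxk : x k with
      | inl m =>
        rw [hxk] at hx
        have hm0 : m = 0 := Nat.le_zero.mp (hle_inl m 0 hx)
        rw [hm0]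
      | inr m =>
        rw [hxk] at hx
        exact absurd hx (hle_inr_inl m 0)
    by_cases hex : ∃ k0, w k0 = Sum.inr 0
    · obtain ⟨k0, hk0⟩ := hex
      have huniq : ∀ k, k ≠ k0 → x k = Sum.inl 0 := by
        intro k hk
        apply hx0
        rcases hw01 k with h | h
        · exact h
        · exfalso
          have hnd : ([k0, k] : List ι).Nodup := by simp [Ne.symm hk]
          obtain ⟨s, hs⟩ := horth [k0, k] hnd
          simp only [List.map_cons, List.map_nil, hk0, h] at hs
          cases hs with
          | cons h1 hd1 =>
            cases h1 with
            | cons h2 hd2 =>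
              cases h2
              rw [hzero, hop0'] at hd1
              exact (hD _ _).mp hd1
      have hsum : ∀ l : List ι, l.Nodup →
          (k0 ∉ l → A.SumDef (l.map x) (Sum.inl 0)) ∧
          (k0 ∈ l → A.SumDef (l.map x) (x k0)) := by
        intro l
        induction l with
        | nil =>
          intro _
          refine ⟨fun _ => ?_, fun h => absurd h List.not_mem_nil⟩
          have h0 := EffectAlgebra.SumDef.nil (A := A)
          rw [hzero] at h0
          simpa using h0
        | cons k t ih =>
          intro hnd
          have hknt : k ∉ t := (List.nodup_cons.mp hnd).1
          obtain ⟨ih0, ih1⟩ := ih (List.nodup_cons.mp hnd).2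
          constructor
          · intro hk
            have hkk : k ≠ k0 := fun h => hk (h ▸ (List.mem_cons_self : k ∈ k :: t))
            have hkt : k0 ∉ t := fun h => hk (List.mem_cons_of_mem _ h)
            have h := EffectAlgebra.SumDef.cons (ih0 hkt) (hD0' (x k))
            simpa [hop0', huniq k hkk] using h
          · intro hk
            by_cases hkk : k = k0
            · subst hkk
              have h := EffectAlgebra.SumDef.cons (ih0 hknt) (hD0' (x k))
              simpa [hop0'] using h
            · have hkt : k0 ∈ t := by
                rcases List.mem_cons.mp hk with h | h
                · exact absurd h.symm hkk
                · exact h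
              have h := EffectAlgebra.SumDef.cons (x := x k) (ih1 hkt)
                (by rw [huniq k hkk]; exact hD0 (x k0))
              simpa [huniq k hkk, hop0] using h
      refine ⟨x k0, ?_, Set.mem_univ _, ?_, ?_⟩
      · intro l hl
        by_cases h : k0 ∈ l
        · exact ⟨_, (hsum l hl).2 h⟩
        · exact ⟨_, (hsum l hl).1 h⟩
      · intro s hs
        obtain ⟨l, hl, hsd⟩ := hs
        by_cases h : k0 ∈ l
        · rw [hsum_unique _ _ hsd _ ((hsum l hl).2 h)]
          exact hle_refl _
        · rw [hsum_unique _ _ hsd _ ((hsum l hl).1 h)]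
          exact hle0 _
      · intro z _ hz
        exact hz _ ⟨[k0], by simp, (hsum [k0] (by simp)).2 (by simp)⟩
    · have hall : ∀ k, x k = Sum.inl 0 := fun k =>
        hx0 k ((hw01 k).resolve_right (fun h => hex ⟨k, h⟩))
      have hsz : ∀ l : List ι, A.SumDef (l.map x) (Sum.inl 0) := by
        intro l
        induction l with
        | nil =>
          have h0 := EffectAlgebra.SumDef.nil (A := A)
          rw [hzero] at h0
          simpa using h0
        | cons k t ih =>
          have h := EffectAlgebra.SumDef.cons ih (hD0' (x k))
          simpa [hop0', hall k] using h
      refine ⟨Sum.inl 0, fun l _ => ⟨_, hsz l⟩, Set.mem_univ _, ?_, fun z _ _ => hle0 z⟩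
      intro s hs
      obtain ⟨l, hl, hsd⟩ := hs
      rw [hsum_unique _ _ hsd _ (hsz l)]
      exact hle_refl _
  · -- not complete
    intro hC
    obtain ⟨⟨s, hs⟩, -⟩ := hC (Set.range Sum.inl)
    cases s with
    | inl m =>
      have h := hs.2.1 (Sum.inl (m + 1)) ⟨m + 1, rfl⟩
      have := hle_inl _ _ h
      omega
    | inr m =>
      have hub : A.IsUB (Set.range Sum.inl) (Sum.inr (m + 1)) := by
        rintro y ⟨n, rfl⟩
        exact hle_inl_inr n (m + 1)
      have h := hs.2.2 (Sum.inr (m + 1)) (Set.mem_univ _) hub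
      have := hle_inr _ _ h
      omega
  · -- not Archimedean
    intro hA
    obtain ⟨n, hn⟩ := hA (Sum.inl 1) (by rw [hzero]; simp)
    apply hn
    refine ⟨Sum.inl n, ?_⟩
    clear hn
    induction n with
    | zero =>
      have h0 := EffectAlgebra.SumDef.nil (A := A)
      rw [hzero] at h0
      simpa using h0
    | succ n ih =>
      have hd : A.D (Sum.inl 1) (Sum.inl n) := by rw [hD]; trivial
      have h := EffectAlgebra.SumDef.cons ih hd
      rw [(hoplus 1 n).1] at h
      have h1 : 1 + n = n + 1 := Nat.add_comm 1 n
      rw [h1] at h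
      rw [List.replicate_succ]
      exact h
end

section
/- Let E be the sub-effect algebra of the product ∏_{n≥1} {0_n, a_n, 1_n} (each factor a 3-element chain effect algebra with a_n ⊕ a_n = 1_n) consisting of sequences with at most finitely many coordinates equal to a_n. Then E is a sharply dominating Archimedean atomic MV-effect algebra which is not sharply orthocomplete, and S(E) = C(E) = ∏_{n≥1} {0_n, 1_n} is a complete Boolean algebra bifull in E. -/
universe u v

set_option linter.unusedSectionVars false

namespace Stmt14Aux

open EffectAlgebra Classical

abbrev Ty := {f : ℕ → Fin 3 // {n | f n = 1}.Finite}

lemma ty_ext {f g : Ty} (h : ∀ n, (f.1 n : ℕ) = g.1 n) : f = g :=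
  Subtype.ext (funext fun n => Fin.ext (h n))

lemma coord_le (f : Ty) (n : ℕ) : (f.1 n : ℕ) ≤ 2 := Fin.is_le _

lemma fin1 (f : Ty) : {n | (f.1 n : ℕ) = 1}.Finite := by
  convert f.2 using 1
  ext n; simp [Fin.ext_iff]

lemma fin_sub (f g : Ty) {v : ℕ → ℕ}
    (hv : ∀ n, v n = 1 → (f.1 n : ℕ) = 1 ∨ (g.1 n : ℕ) = 1) : {n | v n = 1}.Finite :=
  ((fin1 f).union (fin1 g)).subset fun n hn => hv n hn

def mk (v : ℕ → ℕ) (hv : ∀ n, v n ≤ 2) (hfin : {n | v n = 1}.Finite) : Ty :=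
  ⟨fun n => ⟨v n, by have := hv n; omega⟩, by
    convert hfin using 1
    ext n; simp [Fin.ext_iff]⟩

@[simp] lemma mk_coord (v hv hfin) (n : ℕ) : (((mk v hv hfin).1 n : Fin 3) : ℕ) = v n := rfl

section

variable (A : EffectAlgebra Ty)
variable (hzero : ∀ n, (A.zero.1 n : ℕ) = 0)
variable (hone : ∀ n, (A.one.1 n : ℕ) = 2)
variable (hD : ∀ f g, A.D f g ↔ ∀ n, (f.1 n : ℕ) + (g.1 n : ℕ) ≤ 2)
variable (hoplus : ∀ f g, A.D f g →
      ∀ n, ((A.oplus f g).1 n : ℕ) = (f.1 n : ℕ) + (g.1 n : ℕ))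
variable (hcompl : ∀ f n, ((A.compl f).1 n : ℕ) = 2 - (f.1 n : ℕ))

include hD hoplus

lemma le_iff {f g : Ty} : A.le f g ↔ ∀ n, (f.1 n : ℕ) ≤ g.1 n := by
  constructor
  · rintro ⟨z, hz, he⟩ n
    have := hoplus f z hz n
    rw [he] at this
    omega
  · intro h
    refine ⟨mk (fun n => (g.1 n : ℕ) - (f.1 n : ℕ)) (fun n => by have := coord_le g n; beta_reduce; omega)
      (fin_sub f g fun n hn => by have h1 := h n; have h2 := coord_le g n; omega), ?_, ?_⟩
    · rw [hD]; intro n; have h1 := coord_le g n; have h2 := h n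
      simp only [mk_coord]; omega
    · apply ty_ext; intro n
      rw [hoplus]
      · simp only [mk_coord]; have := h n; omega
      · rw [hD]; intro n; have h1 := coord_le g n; have h2 := h n
        simp only [mk_coord]; omega

lemma le_refl (f : Ty) : A.le f f := (le_iff A hD hoplus).2 fun _ => Nat.le_refl _

lemma le_antisymm {f g : Ty} (h1 : A.le f g) (h2 : A.le g f) : f = g := by
  rw [le_iff A hD hoplus] at h1 h2
  exact ty_ext fun n => Nat.le_antisymm (h1 n) (h2 n)

lemma le_trans {f g h : Ty} (h1 : A.le f g) (h2 : A.le g h) : A.le f h := by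
  rw [le_iff A hD hoplus] at *
  exact fun n => Nat.le_trans (h1 n) (h2 n)

lemma inf_unique {P S : Set Ty} {m₁ m₂ : Ty}
    (h1 : A.IsInfIn P S m₁) (h2 : A.IsInfIn P S m₂) : m₁ = m₂ :=
  le_antisymm A hD hoplus (h2.2.2 _ h1.1 h1.2.1) (h1.2.2 _ h2.1 h2.2.1)

lemma sup_unique {P S : Set Ty} {m₁ m₂ : Ty}
    (h1 : A.IsSupIn P S m₁) (h2 : A.IsSupIn P S m₂) : m₁ = m₂ :=
  le_antisymm A hD hoplus (h1.2.2 _ h2.1 h2.2.1) (h2.2.2 _ h1.1 h1.2.1)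

/-- pointwise min -/
def pmin (f g : Ty) : Ty :=
  mk (fun n => min (f.1 n : ℕ) (g.1 n : ℕ)) (fun n => by have := coord_le f n; beta_reduce; omega)
    (fin_sub f g fun n hn => by omega)

/-- pointwise max -/
def pmax (f g : Ty) : Ty :=
  mk (fun n => max (f.1 n : ℕ) (g.1 n : ℕ))
    (fun n => by have h1 := coord_le f n; have h2 := coord_le g n; beta_reduce; omega)
    (fin_sub f g fun n hn => by omega)

lemma pmin_isInf (f g : Ty) : A.IsInfIn Set.univ {f, g} (pmin f g) := by
  refine ⟨trivial, ?_, ?_⟩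
  · rintro x (rfl | rfl) <;> rw [le_iff A hD hoplus] <;> intro n <;> simp [pmin]
  · rintro z - hz
    rw [le_iff A hD hoplus]
    intro n
    have h1 := (le_iff A hD hoplus).1 (hz f (by simp)) n
    have h2 := (le_iff A hD hoplus).1 (hz g (by simp)) n
    simp [pmin]; omega

lemma pmax_isSup (f g : Ty) : A.IsSupIn Set.univ {f, g} (pmax f g) := by
  refine ⟨trivial, ?_, ?_⟩
  · rintro x (rfl | rfl) <;> rw [le_iff A hD hoplus] <;> intro n <;> simp [pmax]
  · rintro z - hz
    rw [le_iff A hD hoplus]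
    intro n
    have h1 := (le_iff A hD hoplus).1 (hz f (by simp)) n
    have h2 := (le_iff A hD hoplus).1 (hz g (by simp)) n
    simp [pmax]; omega

include hzero hcompl

lemma sharp_iff (f : Ty) : A.Sharp f ↔ ∀ n, (f.1 n : ℕ) ≠ 1 := by
  constructor
  · intro hs n
    have := inf_unique A hD hoplus hs (pmin_isInf A hD hoplus f (A.compl f))
    have hc := congrArg (fun x => (x.1 n : ℕ)) this
    simp only [pmin, mk_coord] at hc
    rw [hzero n, hcompl f n] at hc
    omega
  · intro h
    refine ⟨trivial, ?_, ?_⟩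
    · rintro x (rfl | rfl) <;> rw [le_iff A hD hoplus] <;> intro n <;> rw [hzero n] <;> omega
    · rintro z - hz
      rw [le_iff A hD hoplus]
      intro n
      have h1 := (le_iff A hD hoplus).1 (hz f (by simp)) n
      have h2 := (le_iff A hD hoplus).1 (hz (A.compl f) (by simp)) n
      rw [hcompl f n] at h2
      have := h n; have := coord_le f n
      rw [hzero n]; omega

omit hzero hD hoplus hcompl in
lemma infIn_of_univ {P S : Set Ty} {m : Ty} (h : A.IsInfIn Set.univ S m) (hm : m ∈ P) :
    A.IsInfIn P S m := ⟨hm, h.2.1, fun z _ hz => h.2.2 z trivial hz⟩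

omit hzero hD hoplus hcompl in
lemma supIn_of_univ {P S : Set Ty} {s : Ty} (h : A.IsSupIn Set.univ S s) (hs : s ∈ P) :
    A.IsSupIn P S s := ⟨hs, h.2.1, fun z _ hz => h.2.2 z trivial hz⟩

omit hzero hcompl in
include hzero in
lemma sumdef_coord {l : List Ty} {s : Ty} (h : A.SumDef l s) (n : ℕ) :
    (s.1 n : ℕ) = (l.map fun f => (f.1 n : ℕ)).sum := by
  induction h with
  | nil => simp [hzero]
  | cons h hd ih => simp [hoplus _ _ hd, ih]

omit hcompl in
lemma arch : A.IsArchimedean := by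
  intro x hx
  have hex : ∃ n, (x.1 n : ℕ) ≠ 0 := by
    by_contra h
    push_neg at h
    exact hx (ty_ext fun n => by rw [h n, hzero])
  obtain ⟨n₀, hn₀⟩ := hex
  refine ⟨3, ?_⟩
  rintro ⟨s, hs⟩
  have h1 := sumdef_coord A hzero hD hoplus hs n₀
  have h2 := coord_le s n₀
  simp only [List.map_replicate, List.sum_replicate, smul_eq_mul] at h1
  omega

/-- the atom with value 1 at `k`. -/
def atomAt (k : ℕ) : Ty :=
  mk (fun n => if n = k then 1 else 0) (fun n => by beta_reduce; split <;> omega)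
    ((Set.finite_singleton k).subset fun n hn => by
      simp only [Set.mem_setOf_eq] at hn
      by_cases h : n = k
      · simpa using h
      · simp [h] at hn)

/-- the sharp element with value 2 at `k`. -/
def twoAt (k : ℕ) : Ty :=
  mk (fun n => if n = k then 2 else 0) (fun n => by beta_reduce; split <;> omega)
    (Set.finite_empty.subset fun n hn => by
      simp only [Set.mem_setOf_eq] at hn
      split at hn <;> omega)

omit hcompl in
lemma atomAt_isAtom (k : ℕ) : A.Atom (atomAt k) := by
  constructor
  · intro h
    have := congrArg (fun f => (f.1 k : ℕ)) h
    simp [atomAt, hzero] at this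
  · intro b hb
    rw [le_iff A hD hoplus] at hb
    by_cases hk : (b.1 k : ℕ) = 0
    · left
      apply ty_ext
      intro n
      have := hb n
      rw [hzero]
      by_cases h : n = k
      · subst h; omega
      · simp [atomAt, h] at this; omega
    · right
      apply ty_ext
      intro n
      have := hb n
      by_cases h : n = k
      · subst h; simp only [atomAt, mk_coord] at *; simp at *; omega
      · simp [atomAt, h] at this ⊢; omega

omit hcompl in
lemma atomic : A.Atomic := by
  intro x hx
  have hex : ∃ n, (x.1 n : ℕ) ≠ 0 := by
    by_contra h
    push_neg at h
    exact hx (ty_ext fun n => by rw [h n, hzero])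
  obtain ⟨k, hk⟩ := hex
  refine ⟨atomAt k, atomAt_isAtom A hzero hD hoplus k, ?_⟩
  rw [le_iff A hD hoplus]
  intro n
  by_cases h : n = k
  · subst h; simp only [atomAt, mk_coord]; simp; omega
  · simp [atomAt, h]

lemma sharplyDominating : A.SharplyDominating := by
  intro x
  set w : Ty := mk (fun n => if (x.1 n : ℕ) = 0 then 0 else 2)
    (fun n => by beta_reduce; split <;> omega)
    (Set.finite_empty.subset fun n hn => by
      simp only [Set.mem_setOf_eq] at hn
      split at hn <;> omega) with hw
  have hwsharp : A.Sharp w := by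
    rw [sharp_iff A hzero hD hoplus hcompl]
    intro n
    simp only [hw, mk_coord]
    split <;> omega
  have hxw : A.le x w := by
    rw [le_iff A hD hoplus]
    intro n
    have := coord_le x n
    simp only [hw, mk_coord]
    split <;> omega
  have hlb : A.IsLB {v | A.Sharp v ∧ A.le x v} w := by
    intro v ⟨hv, hxv⟩
    rw [le_iff A hD hoplus] at hxv ⊢
    rw [sharp_iff A hzero hD hoplus hcompl] at hv
    intro n
    have h1 := hxv n
    have h2 := hv n
    have h3 := coord_le v n
    simp only [hw, mk_coord]
    split <;> omega
  have hmem : w ∈ {v | A.Sharp v ∧ A.le x v} := ⟨hwsharp, hxw⟩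
  exact ⟨w, hwsharp, hxw,
    ⟨trivial, hlb, fun z _ hz => hz w hmem⟩,
    ⟨hwsharp, hlb, fun z _ hz => hz w hmem⟩⟩

omit hzero hD hoplus hcompl in
@[simp] lemma pmin_coord (f g : Ty) (n : ℕ) :
    ((pmin f g).1 n : ℕ) = min (f.1 n : ℕ) (g.1 n : ℕ) := rfl

omit hzero hD hoplus hcompl in
@[simp] lemma pmax_coord (f g : Ty) (n : ℕ) :
    ((pmax f g).1 n : ℕ) = max (f.1 n : ℕ) (g.1 n : ℕ) := rfl

omit hzero hcompl in
lemma mv : A.MV := by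
  constructor
  · intro x y
    exact ⟨⟨pmin x y, pmin_isInf A hD hoplus x y⟩, ⟨pmax x y, pmax_isSup A hD hoplus x y⟩⟩
  · intro x y
    set z : Ty := mk (fun n => (y.1 n : ℕ) - min (x.1 n : ℕ) (y.1 n : ℕ))
        (fun n => by have := coord_le y n; beta_reduce; omega)
        (fin_sub x y fun n hn => by have := coord_le y n; omega) with hzdef
    have hzc : ∀ n, (z.1 n : ℕ) = (y.1 n : ℕ) - min (x.1 n : ℕ) (y.1 n : ℕ) :=
      fun n => rfl
    have h1 : A.D (pmin x y) z := by
      rw [hD]; intro n; have := coord_le y n; rw [hzc, pmin_coord]; omega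
    have h2 : A.oplus (pmin x y) z = y := by
      apply ty_ext; intro n
      rw [hoplus _ _ h1, hzc, pmin_coord]; omega
    have h3 : A.D x z := by
      rw [hD]; intro n
      have := coord_le y n; have := coord_le x n
      rw [hzc]; omega
    have h4 : A.oplus x z = pmax x y := by
      apply ty_ext; intro n
      rw [hoplus _ _ h3, hzc, pmax_coord]; omega
    exact ⟨pmin x y, pmax x y, z, pmin_isInf A hD hoplus x y, pmax_isSup A hD hoplus x y,
      h1, h2, h3, h4⟩

lemma sharpSet_eq : A.sharpSet = {f : Ty | ∀ n, f.1 n ≠ 1} := by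
  ext f
  rw [Set.mem_setOf_eq]
  show A.Sharp f ↔ _
  rw [sharp_iff A hzero hD hoplus hcompl]
  constructor
  · intro h n hn
    exact h n (by rw [hn]; rfl)
  · intro h n hn
    exact h n (Fin.ext (by simpa using hn))

lemma sharp_zero : A.Sharp A.zero := by
  rw [sharp_iff A hzero hD hoplus hcompl]
  intro n; rw [hzero]; omega

include hone in
lemma sharp_one : A.Sharp A.one := by
  rw [sharp_iff A hzero hD hoplus hcompl]
  intro n; rw [hone]; omega

lemma sharp_compl {f : Ty} (h : A.Sharp f) : A.Sharp (A.compl f) := by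
  rw [sharp_iff A hzero hD hoplus hcompl] at *
  intro n; rw [hcompl]; have := h n; have := coord_le f n; omega

lemma sharp_pmin {f g : Ty} (hf : A.Sharp f) (hg : A.Sharp g) : A.Sharp (pmin f g) := by
  rw [sharp_iff A hzero hD hoplus hcompl] at *
  intro n; have := hf n; have := hg n; simp only [pmin_coord]; omega

lemma sharp_pmax {f g : Ty} (hf : A.Sharp f) (hg : A.Sharp g) : A.Sharp (pmax f g) := by
  rw [sharp_iff A hzero hD hoplus hcompl] at *
  intro n; have := hf n; have := hg n; simp only [pmax_coord]; omega

lemma centerSet_eq : A.centerSet = A.sharpSet := by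
  ext c
  show A.Central c ↔ A.Sharp c
  constructor
  · intro hc
    rw [sharp_iff A hzero hD hoplus hcompl]
    intro k hk
    obtain ⟨m₁, m₂, h₁, h₂, h₃⟩ := hc (twoAt k)
    have e₁ : m₁ = pmin (twoAt k) c :=
      inf_unique A hD hoplus h₁ (pmin_isInf A hD hoplus (twoAt k) c)
    have e₂ : m₂ = pmin (twoAt k) (A.compl c) :=
      inf_unique A hD hoplus h₂ (pmin_isInf A hD hoplus (twoAt k) (A.compl c))
    have e₃ : twoAt k = pmax m₁ m₂ := sup_unique A hD hoplus h₃ (pmax_isSup A hD hoplus m₁ m₂)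
    have hyk : (((twoAt k).1 k : Fin 3) : ℕ) = 2 := by
      show (if k = k then 2 else 0) = 2
      simp
    have := congrArg (fun f => (f.1 k : ℕ)) e₃
    simp only [e₁, e₂, pmax_coord, pmin_coord, hcompl] at this
    rw [hyk] at this
    omega
  · intro hc
    rw [sharp_iff A hzero hD hoplus hcompl] at hc
    intro y
    refine ⟨pmin y c, pmin y (A.compl c), pmin_isInf A hD hoplus y c,
      pmin_isInf A hD hoplus y (A.compl c), ?_⟩
    have : pmax (pmin y c) (pmin y (A.compl c)) = y := by
      apply ty_ext
      intro n
      have h1 := hc n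
      have h2 := coord_le c n
      have h3 := coord_le y n
      simp only [pmax_coord, pmin_coord, hcompl]
      omega
    have hs := pmax_isSup A hD hoplus (pmin y c) (pmin y (A.compl c))
    rw [this] at hs
    exact hs

open scoped Classical in
/-- canonical sup of a set of sharp elements -/
noncomputable def ssup (S : Set Ty) : Ty :=
  mk (fun n => if ∃ f ∈ S, (f.1 n : ℕ) = 2 then 2 else 0)
    (fun n => by beta_reduce; split <;> omega)
    (Set.finite_empty.subset fun n hn => by
      simp only [Set.mem_setOf_eq] at hn; split at hn <;> omega)

open scoped Classical in
/-- canonical inf of a set of sharp elements -/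
noncomputable def sinf (S : Set Ty) : Ty :=
  mk (fun n => if ∀ f ∈ S, (f.1 n : ℕ) = 2 then 2 else 0)
    (fun n => by beta_reduce; split <;> omega)
    (Set.finite_empty.subset fun n hn => by
      simp only [Set.mem_setOf_eq] at hn; split at hn <;> omega)

omit hzero hD hoplus hcompl in
open scoped Classical in
lemma ssup_coord (S : Set Ty) (n : ℕ) :
    ((ssup S).1 n : ℕ) = if ∃ f ∈ S, (f.1 n : ℕ) = 2 then 2 else 0 := rfl

omit hzero hD hoplus hcompl in
open scoped Classical in
lemma sinf_coord (S : Set Ty) (n : ℕ) :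
    ((sinf S).1 n : ℕ) = if ∀ f ∈ S, (f.1 n : ℕ) = 2 then 2 else 0 := rfl

lemma ssup_sharp (S : Set Ty) : A.Sharp (ssup S) := by
  rw [sharp_iff A hzero hD hoplus hcompl]
  intro n
  rw [ssup_coord]
  split <;> omega

lemma sinf_sharp (S : Set Ty) : A.Sharp (sinf S) := by
  rw [sharp_iff A hzero hD hoplus hcompl]
  intro n
  rw [sinf_coord]
  split <;> omega

lemma ssup_isSup_univ {S : Set Ty} (hS : S ⊆ A.sharpSet) :
    A.IsSupIn Set.univ S (ssup S) := by
  refine ⟨trivial, ?_, ?_⟩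
  · intro f hf
    rw [le_iff A hD hoplus]
    intro n
    have hfs := (sharp_iff A hzero hD hoplus hcompl f).1 (hS hf) n
    have hfl := coord_le f n
    rw [ssup_coord]
    split
    · omega
    · next h =>
      push_neg at h
      have := h f hf
      omega
  · intro z _ hz
    rw [le_iff A hD hoplus]
    intro n
    rw [ssup_coord]
    split
    · next h =>
      obtain ⟨f, hf, hf2⟩ := h
      have := (le_iff A hD hoplus).1 (hz f hf) n
      omega
    · omega

lemma sinf_isInf_univ {S : Set Ty} (hS : S ⊆ A.sharpSet) :
    A.IsInfIn Set.univ S (sinf S) := by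
  refine ⟨trivial, ?_, ?_⟩
  · intro f hf
    rw [le_iff A hD hoplus]
    intro n
    rw [sinf_coord]
    split
    · next h => have := h f hf; omega
    · omega
  · intro z _ hz
    rw [le_iff A hD hoplus]
    intro n
    have hzl := coord_le z n
    rw [sinf_coord]
    split
    · omega
    · next h =>
      push_neg at h
      obtain ⟨f, hf, hf2⟩ := h
      have h1 := (le_iff A hD hoplus).1 (hz f hf) n
      have h2 := (sharp_iff A hzero hD hoplus hcompl f).1 (hS hf) n
      have h3 := coord_le f n
      omega

lemma completeIn : A.CompleteIn A.sharpSet := by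
  intro S hS
  exact ⟨⟨ssup S, supIn_of_univ A (ssup_isSup_univ A hzero hD hoplus hcompl hS)
      (ssup_sharp A hzero hD hoplus hcompl S)⟩,
    ⟨sinf S, infIn_of_univ A (sinf_isInf_univ A hzero hD hoplus hcompl hS)
      (sinf_sharp A hzero hD hoplus hcompl S)⟩⟩

lemma bifull : A.Bifull A.sharpSet := by
  intro S hS
  constructor
  · intro s hs
    have := sup_unique A hD hoplus hs (supIn_of_univ A
      (ssup_isSup_univ A hzero hD hoplus hcompl hS) (ssup_sharp A hzero hD hoplus hcompl S))
    rw [this]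
    exact ssup_isSup_univ A hzero hD hoplus hcompl hS
  · intro s hs
    have := sup_unique A hD hoplus hs (ssup_isSup_univ A hzero hD hoplus hcompl hS)
    rw [this]
    exact supIn_of_univ A (ssup_isSup_univ A hzero hD hoplus hcompl hS)
      (ssup_sharp A hzero hD hoplus hcompl S)

lemma sharp_inf_in_P {x y : Ty} (hx : A.Sharp x) (hy : A.Sharp y) :
    A.IsInfIn A.sharpSet {x, y} (pmin x y) :=
  infIn_of_univ A (pmin_isInf A hD hoplus x y) (sharp_pmin A hzero hD hoplus hcompl hx hy)

lemma sharp_sup_in_P {x y : Ty} (hx : A.Sharp x) (hy : A.Sharp y) :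
    A.IsSupIn A.sharpSet {x, y} (pmax x y) :=
  supIn_of_univ A (pmax_isSup A hD hoplus x y) (sharp_pmax A hzero hD hoplus hcompl hx hy)

include hone in
lemma booleanIn : A.BooleanIn A.sharpSet := by
  refine ⟨?_, sharp_zero A hzero hD hoplus hcompl, sharp_one A hzero hone hD hoplus hcompl,
    ?_, ?_, ?_⟩
  · intro x hx y hy
    exact ⟨⟨pmin x y, sharp_inf_in_P A hzero hD hoplus hcompl hx hy⟩,
      ⟨pmax x y, sharp_sup_in_P A hzero hD hoplus hcompl hx hy⟩⟩
  · intro x hx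
    exact sharp_compl A hzero hD hoplus hcompl hx
  · intro x hx
    have hx' := (sharp_iff A hzero hD hoplus hcompl x).1 hx
    have e1 : pmin x (A.compl x) = A.zero := by
      apply ty_ext
      intro n
      have := hx' n; have := coord_le x n
      rw [pmin_coord, hcompl, hzero]
      omega
    have e2 : pmax x (A.compl x) = A.one := by
      apply ty_ext
      intro n
      have := hx' n; have := coord_le x n
      rw [pmax_coord, hcompl, hone]
      omega
    constructor
    · rw [← e1]
      exact sharp_inf_in_P A hzero hD hoplus hcompl hx (sharp_compl A hzero hD hoplus hcompl hx)
    · rw [← e2]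
      exact sharp_sup_in_P A hzero hD hoplus hcompl hx (sharp_compl A hzero hD hoplus hcompl hx)
  · intro x hx y hy z hz jyz mxy mxz m hjyz hmxy hmxz hm
    have hxc := (sharp_iff A hzero hD hoplus hcompl x).1 hx
    have hyc := (sharp_iff A hzero hD hoplus hcompl y).1 hy
    have hzc := (sharp_iff A hzero hD hoplus hcompl z).1 hz
    have e1 : jyz = pmax y z :=
      sup_unique A hD hoplus hjyz (sharp_sup_in_P A hzero hD hoplus hcompl hy hz)
    have e2 : mxy = pmin x y :=
      inf_unique A hD hoplus hmxy (sharp_inf_in_P A hzero hD hoplus hcompl hx hy)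
    have e3 : mxz = pmin x z :=
      inf_unique A hD hoplus hmxz (sharp_inf_in_P A hzero hD hoplus hcompl hx hz)
    subst e1 e2 e3
    have e4 : m = pmin x (pmax y z) :=
      inf_unique A hD hoplus hm (sharp_inf_in_P A hzero hD hoplus hcompl hx
        (sharp_pmax A hzero hD hoplus hcompl hy hz))
    subst e4
    have key : pmin x (pmax y z) = pmax (pmin x y) (pmin x z) := by
      apply ty_ext
      intro n
      rw [pmin_coord, pmax_coord, pmax_coord, pmin_coord, pmin_coord]
      omega
    rw [key]
    exact sharp_sup_in_P A hzero hD hoplus hcompl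
      (sharp_pmin A hzero hD hoplus hcompl hx hy) (sharp_pmin A hzero hD hoplus hcompl hx hz)

omit hzero hD hoplus hcompl in
lemma atomAt_coord (k n : ℕ) : ((atomAt k).1 n : ℕ) = if n = k then 1 else 0 := rfl

omit hzero hD hoplus hcompl in
lemma twoAt_coord (k n : ℕ) : ((twoAt k).1 n : ℕ) = if n = k then 2 else 0 := rfl

omit hzero hD hoplus hcompl in
lemma indsum (n : ℕ) : ∀ l : List ℕ, l.Nodup →
    (l.map fun k => if n = k then (1:ℕ) else 0).sum ≤ 1 := by
  intro l
  induction l with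
  | nil => simp
  | cons k t ih =>
    intro h
    rcases List.nodup_cons.1 h with ⟨hk, ht⟩
    simp only [List.map_cons, List.sum_cons]
    by_cases hnk : n = k
    · subst hnk
      have hz : (t.map fun j => if n = j then (1:ℕ) else 0).sum = 0 := by
        apply List.sum_eq_zero
        intro x hx
        obtain ⟨j, hj, rfl⟩ := List.mem_map.1 hx
        simp [show n ≠ j from fun h => hk (h ▸ hj)]
      simp [hz]
    · simp only [if_neg hnk, Nat.zero_add]
      exact ih ht

/-- the characteristic element of a finite list, with value 2 on its members -/
def listTwo (l : List ℕ) : Ty :=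
  mk (fun n => if n ∈ l then 2 else 0) (fun n => by beta_reduce; split <;> omega)
    (Set.finite_empty.subset fun n hn => by
      simp only [Set.mem_setOf_eq] at hn; split at hn <;> omega)

omit hzero hD hoplus hcompl in
lemma listTwo_coord (l : List ℕ) (n : ℕ) :
    ((listTwo l).1 n : ℕ) = if n ∈ l then 2 else 0 := rfl

lemma twoAt_sharp (k : ℕ) : A.Sharp (twoAt k) := by
  rw [sharp_iff A hzero hD hoplus hcompl]
  intro n
  rw [twoAt_coord]
  split <;> omega

omit hcompl in
lemma listTwo_sumdef : ∀ l : List ℕ, l.Nodup → A.SumDef (l.map twoAt) (listTwo l) := by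
  intro l
  induction l with
  | nil =>
    intro _
    have h0 : listTwo [] = A.zero := by
      apply ty_ext
      intro n
      rw [hzero, listTwo_coord]
      simp
    rw [List.map_nil, h0]
    exact SumDef.nil
  | cons k t ih =>
    intro h
    rcases List.nodup_cons.1 h with ⟨hk, ht⟩
    have hd : A.D (twoAt k) (listTwo t) := by
      rw [hD]
      intro n
      rw [twoAt_coord, listTwo_coord]
      by_cases hnk : n = k
      · subst hnk
        simp [hk]
      · simp only [if_neg hnk, Nat.zero_add]
        split <;> omega
    have heq : A.oplus (twoAt k) (listTwo t) = listTwo (k :: t) := by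
      apply ty_ext
      intro n
      rw [hoplus _ _ hd, twoAt_coord, listTwo_coord, listTwo_coord]
      by_cases hnk : n = k
      · subst hnk
        simp [hk]
      · simp [hnk]
    rw [List.map_cons, ← heq]
    exact SumDef.cons (ih ht) hd

omit hcompl in
lemma atomAt_mem_finiteSums (k : ℕ) : atomAt k ∈ A.finiteSums atomAt := by
  have hd : A.D (atomAt k) A.zero := by
    rw [hD]
    intro n
    rw [hzero, atomAt_coord]
    split <;> omega
  have heq : A.oplus (atomAt k) A.zero = atomAt k := by
    apply ty_ext
    intro n
    rw [hoplus _ _ hd, hzero]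
    omega
  refine ⟨[k], List.nodup_singleton k, ?_⟩
  have hs := SumDef.cons (EffectAlgebra.SumDef.nil (A := A)) hd
  rw [heq] at hs
  rwa [List.map_singleton]

lemma notSOC : ¬ A.SharplyOrthocomplete := by
  intro h
  obtain ⟨v, hv⟩ := h ℕ atomAt twoAt (fun k => twoAt_sharp A hzero hD hoplus hcompl k)
    (fun l hl => ⟨listTwo l, listTwo_sumdef A hzero hD hoplus l hl⟩)
    (fun k => by
      rw [le_iff A hD hoplus]
      intro n
      rw [atomAt_coord, twoAt_coord]
      split <;> omega)
  obtain ⟨-, hsup⟩ := hv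
  -- every coordinate of v is at least 1
  have hv1 : ∀ k, 1 ≤ (v.1 k : ℕ) := by
    intro k
    have := (le_iff A hD hoplus).1
      (hsup.2.1 (atomAt k) (atomAt_mem_finiteSums A hzero hD hoplus k)) k
    rw [atomAt_coord, if_pos rfl] at this
    exact this
  -- some coordinate of v equals 2
  obtain ⟨m, hm⟩ : ∃ m, (v.1 m : ℕ) ≠ 1 := ((fin1 v).infinite_compl).nonempty
  have hm2 : (v.1 m : ℕ) = 2 := by
    have := coord_le v m
    have := hv1 m
    omega
  -- a strictly smaller upper bound
  set v' : Ty := mk (fun n => if n = m then 1 else 2)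
    (fun n => by beta_reduce; split <;> omega)
    ((Set.finite_singleton m).subset fun n hn => by
      simp only [Set.mem_setOf_eq] at hn
      by_cases h : n = m
      · simpa using h
      · simp [h] at hn) with hv'
  have hub : A.IsUB (A.finiteSums atomAt) v' := by
    rintro s ⟨l, hl, hsum⟩
    rw [le_iff A hD hoplus]
    intro n
    have hc := sumdef_coord A hzero hD hoplus hsum n
    rw [List.map_map] at hc
    have hle : (s.1 n : ℕ) ≤ 1 := by
      rw [hc]
      exact indsum n l hl
    have : ((v'.1 n : Fin 3) : ℕ) = if n = m then 1 else 2 := rfl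
    rw [this]
    split <;> omega
  have := (le_iff A hD hoplus).1 (hsup.2.2 v' trivial hub) m
  have h2 : ((v'.1 m : Fin 3) : ℕ) = 1 := by
    show (if m = m then 1 else 2) = 1
    simp
  rw [h2, hm2] at this
  omega

end

end Stmt14Aux

/-- The sub-effect algebra of `∏_{n≥1} {0ₙ, aₙ, 1ₙ}` consisting of sequences with
finitely many coordinates equal to `a` (factors encoded as `Fin 3`, with `1`
playing the role of `a` and pointwise partial addition) is a sharply dominating
Archimedean atomic MV-effect algebra which is not sharply orthocomplete, and
`S(E) = C(E)` is the set of `{0,1}`-valued sequences, a complete Boolean algebra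
bifull in `E`. -/
theorem stmt14
    (A : EffectAlgebra {f : ℕ → Fin 3 // {n | f n = 1}.Finite})
    (hzero : ∀ n, (A.zero.1 n : ℕ) = 0)
    (hone : ∀ n, (A.one.1 n : ℕ) = 2)
    (hD : ∀ f g, A.D f g ↔ ∀ n, (f.1 n : ℕ) + (g.1 n : ℕ) ≤ 2)
    (hoplus : ∀ f g, A.D f g →
      ∀ n, ((A.oplus f g).1 n : ℕ) = (f.1 n : ℕ) + (g.1 n : ℕ))
    (hcompl : ∀ f n, ((A.compl f).1 n : ℕ) = 2 - (f.1 n : ℕ)) :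
    A.SharplyDominating ∧ A.IsArchimedean ∧ A.Atomic ∧ A.MV ∧
      ¬ A.SharplyOrthocomplete ∧
      A.sharpSet = {f | ∀ n, f.1 n ≠ 1} ∧
      A.centerSet = A.sharpSet ∧
      A.CompleteIn A.sharpSet ∧ A.BooleanIn A.sharpSet ∧
      A.Bifull A.sharpSet := by
  exact ⟨Stmt14Aux.sharplyDominating A hzero hD hoplus hcompl,
    Stmt14Aux.arch A hzero hD hoplus,
    Stmt14Aux.atomic A hzero hD hoplus,
    Stmt14Aux.mv A hD hoplus,
    Stmt14Aux.notSOC A hzero hD hoplus hcompl,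
    Stmt14Aux.sharpSet_eq A hzero hD hoplus hcompl,
    Stmt14Aux.centerSet_eq A hzero hD hoplus hcompl,
    Stmt14Aux.completeIn A hzero hD hoplus hcompl,
    Stmt14Aux.booleanIn A hzero hone hD hoplus hcompl,
    Stmt14Aux.bifull A hzero hD hoplus hcompl⟩
end
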